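/- arXiv:2210.15744 — 4 statements merged into one kernel-verified Lean document; each statement's English description precedes it below -/
import Mathlib

section
/- The unit vector basis of Ti(p,γ) is 1-subsymmetric: for every strictly increasing map π : ℕ → ℕ and every a ∈ c₀₀, the vector b defined by b_{π(n)} = aₙ and b_k = 0 for k ∉ range(π) satisfies ‖b‖ = ‖a‖. -/
open Finset

noncomputable section

/-- Coordinate restriction `E a` of a finitely supported sequence `a` to the finite set `E`. -/
def restr (E : Finset ℕ) (a : ℕ →₀ ℝ) : ℕ →₀ ℝ := a.filter (· ∈ E)

/-- `E₁ < E₂ < ⋯ < Eₙ`: a family of nonempty finite sets of naturals which are consecutive. -/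
def Consec {n : ℕ} (E : Fin n → Finset ℕ) : Prop :=
  (∀ j, (E j).Nonempty) ∧ ∀ i j : Fin n, i < j → ∀ s ∈ E i, ∀ t ∈ E j, s < t

/-- The set of quantities `γ·(∑ⱼ N(Eⱼ a))/n^{1/q}` over all consecutive families `E₁ < ⋯ < Eₙ`. -/
def tiSet (q γ : ℝ) (N : (ℕ →₀ ℝ) → ℝ) (a : ℕ →₀ ℝ) : Set ℝ :=
  {x | ∃ n : ℕ, 0 < n ∧ ∃ E : Fin n → Finset ℕ, Consec E ∧
    x = γ * (∑ j, N (restr (E j) a)) / (n : ℝ) ^ (1 / q)}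

/-- `N` satisfies the implicit equation defining the norm of the Tirilman space `Ti(p,γ)`:
`‖a‖ = max {‖a‖_∞, γ·sup (∑ⱼ ‖Eⱼ a‖)/n^{1/q}}`. -/
def TiEq (q γ : ℝ) (N : (ℕ →₀ ℝ) → ℝ) : Prop :=
  ∀ a : ℕ →₀ ℝ, N a = max (⨆ i, |a i|) (sSup (tiSet q γ N a))

/-- Finitely many finitely supported vectors have consecutive supports. -/
def ConsecSupp {n : ℕ} (x : Fin n → (ℕ →₀ ℝ)) : Prop :=
  ∀ i j : Fin n, i < j → ∀ s ∈ (x i).support, ∀ t ∈ (x j).support, s < t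

/-- A sequence of finitely supported vectors with consecutive supports. -/
def ConsecSuppSeq (x : ℕ → (ℕ →₀ ℝ)) : Prop :=
  ∀ i j : ℕ, i < j → ∀ s ∈ (x i).support, ∀ t ∈ (x j).support, s < t

/-- The dual norm on `Ti^*(p,γ)` of the functional with coefficient vector `c`:
the supremum of `∑ᵢ cᵢ aᵢ` over the unit ball of the Tirilman norm `N`. -/
def dualN (N : (ℕ →₀ ℝ) → ℝ) (c : ℕ →₀ ℝ) : ℝ :=
  sSup {x | ∃ a : ℕ →₀ ℝ, N a ≤ 1 ∧ x = ∑ i ∈ c.support, c i * a i}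

lemma restr_apply (E : Finset ℕ) (a : ℕ →₀ ℝ) (i : ℕ) :
    restr E a i = if i ∈ E then a i else 0 := by
  simp [restr, Finsupp.filter_apply]

lemma restr_support (E : Finset ℕ) (a : ℕ →₀ ℝ) :
    (restr E a).support = a.support.filter (· ∈ E) := by
  simp [restr, Finsupp.support_filter]

lemma restr_zero (E : Finset ℕ) : restr E 0 = 0 := by
  ext i; simp [restr_apply]

lemma restr_eq_self (E : Finset ℕ) (a : ℕ →₀ ℝ) (h : ∀ i ∈ a.support, i ∈ E) :
    restr E a = a := by
  ext i
  rw [restr_apply]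
  by_cases hi : i ∈ E
  · simp [hi]
  · simp only [hi, if_false]
    by_contra h'
    exact hi (h i (Finsupp.mem_support_iff.2 fun hh => h' hh.symm))

lemma restr_eq_zero (E : Finset ℕ) (a : ℕ →₀ ℝ) (h : ∀ i ∈ E, a i = 0) :
    restr E a = 0 := by
  ext i; rw [restr_apply]
  by_cases hi : i ∈ E <;> simp [hi, h]

lemma abs_le_sum (a : ℕ →₀ ℝ) (i : ℕ) : |a i| ≤ ∑ j ∈ a.support, |a j| := by
  by_cases hi : i ∈ a.support
  · exact Finset.single_le_sum (f := fun j => |a j|) (fun j _ => abs_nonneg _) hi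
  · rw [Finsupp.notMem_support_iff.1 hi]
    rw [abs_zero]
    exact Finset.sum_nonneg fun j _ => abs_nonneg _

lemma bdd_abs (a : ℕ →₀ ℝ) : BddAbove (Set.range fun i => |a i|) := by
  refine ⟨∑ j ∈ a.support, |a j|, ?_⟩
  rintro x ⟨i, rfl⟩
  exact abs_le_sum a i


lemma N_nonneg {q γ : ℝ} {N : (ℕ →₀ ℝ) → ℝ} (hN : TiEq q γ N) (a : ℕ →₀ ℝ) :
    0 ≤ N a := by
  rw [hN a]
  refine le_trans ?_ (le_max_left _ _)
  exact Real.iSup_nonneg fun i => abs_nonneg _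

lemma sSup_tiSet_le {q γ : ℝ} {N : (ℕ →₀ ℝ) → ℝ} (hN : TiEq q γ N) (a : ℕ →₀ ℝ) :
    sSup (tiSet q γ N a) ≤ N a := by
  rw [hN a]; exact le_max_right _ _

lemma iSup_abs_zero : (⨆ i : ℕ, |(0 : ℕ →₀ ℝ) i|) = 0 := by
  simp

-- the singleton family
lemma consec_singletons (n : ℕ) : Consec (fun j : Fin n => ({(j : ℕ)} : Finset ℕ)) := by
  constructor
  · intro j; exact ⟨j, Finset.mem_singleton_self _⟩
  · intro i j hij s hs t ht
    rw [Finset.mem_singleton] at hs ht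
    subst hs; subst ht
    exact_mod_cast hij

lemma N_zero {p q γ : ℝ} (hp : 1 < p) (hpq : 1 / p + 1 / q = 1) (hγ0 : 0 < γ)
    {N : (ℕ →₀ ℝ) → ℝ} (hN : TiEq q γ N) : N 0 = 0 := by
  have hp0 : (0:ℝ) < p := lt_trans one_pos hp
  have h0 := N_nonneg hN 0
  rcases eq_or_lt_of_le h0 with h | h
  · exact h.symm
  exfalso
  -- elements of tiSet for a = 0
  have hmem : ∀ n : ℕ, 0 < n → γ * ((n : ℝ) * N 0) / (n : ℝ) ^ (1/q) ∈ tiSet q γ N 0 := by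
    intro n hn
    refine ⟨n, hn, fun j => {(j : ℕ)}, consec_singletons n, ?_⟩
    have : ∀ j : Fin n, N (restr ({(j:ℕ)} : Finset ℕ) 0) = N 0 := fun j => by
      rw [restr_zero]
    rw [Finset.sum_congr rfl (fun j _ => this j), Finset.sum_const, Finset.card_univ,
      Fintype.card_fin, nsmul_eq_mul]
  -- rewrite value as γ * N 0 * n ^ (1/p)
  have hval : ∀ n : ℕ, 0 < n →
      γ * ((n : ℝ) * N 0) / (n : ℝ) ^ (1/q) = γ * N 0 * (n : ℝ) ^ (1/p) := by
    intro n hn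
    have hn0 : (0:ℝ) < (n:ℝ) := by exact_mod_cast hn
    have h1 : (n:ℝ) ^ (1/p) = (n:ℝ) / (n:ℝ) ^ (1/q) := by
      rw [eq_div_iff (ne_of_gt (Real.rpow_pos_of_pos hn0 _)),
        ← Real.rpow_add hn0, hpq, Real.rpow_one]
    rw [h1]; ring
  -- pick n large
  set M : ℝ := (1/γ) ^ p with hM
  have hMnn : 0 ≤ M := Real.rpow_nonneg (by positivity) _
  set n : ℕ := ⌈M⌉₊ + 1 with hn
  have hnpos : 0 < n := Nat.succ_pos _
  have hMn : M < (n : ℝ) := lt_of_le_of_lt (Nat.le_ceil M) (by exact_mod_cast Nat.lt_succ_self _)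
  have hpow : (1/γ) < (n : ℝ) ^ (1/p) := by
    have h' := Real.rpow_lt_rpow hMnn hMn (by positivity : (0:ℝ) < 1/p)
    have hc : ((1/γ:ℝ)^p)^(1/p) = 1/γ := by
      rw [← Real.rpow_mul (by positivity), mul_one_div_cancel (ne_of_gt hp0), Real.rpow_one]
    rwa [hM, hc] at h'
  have hbig : N 0 < γ * N 0 * (n:ℝ) ^ (1/p) := by
    have h2 : 1 < γ * (n:ℝ) ^ (1/p) := by
      have h3 := mul_lt_mul_of_pos_left hpow hγ0
      rwa [mul_one_div, div_self (ne_of_gt hγ0)] at h3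
    calc N 0 = 1 * N 0 := (one_mul _).symm
    _ < (γ * (n:ℝ)^(1/p)) * N 0 := by exact mul_lt_mul_of_pos_right h2 h
    _ = γ * N 0 * (n:ℝ)^(1/p) := by ring
  -- but the element is ≤ sSup ≤ N 0, or sSup junk
  have hel : γ * N 0 * (n:ℝ) ^ (1/p) ∈ tiSet q γ N 0 := by
    rw [← hval n hnpos]; exact hmem n hnpos
  by_cases hbdd : BddAbove (tiSet q γ N 0)
  · have := le_csSup hbdd hel
    have h2 := sSup_tiSet_le hN 0
    linarith
  · have hs := Real.sSup_of_not_bddAbove hbdd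
    have h3 := hN 0
    rw [iSup_abs_zero, hs, max_self] at h3
    exact absurd h3.symm (ne_of_lt h)


lemma q_inv_pos {p q : ℝ} (hp : 1 < p) (hpq : 1 / p + 1 / q = 1) : 0 < 1 / q := by
  have h1 : 1 / p < 1 := by
    rw [div_lt_one (lt_trans one_pos hp)]; exact hp
  linarith

lemma one_le_rpow_q {p q : ℝ} (hp : 1 < p) (hpq : 1 / p + 1 / q = 1) {n : ℕ} (hn : 0 < n) :
    1 ≤ (n : ℝ) ^ (1 / q) := by
  have : (1:ℝ) ≤ (n:ℝ) := by exact_mod_cast hn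
  calc (1:ℝ) = (1:ℝ) ^ (1/q) := (Real.one_rpow _).symm
  _ ≤ (n:ℝ) ^ (1/q) := Real.rpow_le_rpow one_pos.le this (q_inv_pos hp hpq).le

lemma consec_disjoint {n : ℕ} {E : Fin n → Finset ℕ} (hE : Consec E)
    {i j : Fin n} (hij : i ≠ j) {s : ℕ} (hi : s ∈ E i) (hj : s ∈ E j) : False := by
  rcases lt_or_gt_of_ne hij with h | h
  · exact lt_irrefl s (hE.2 i j h s hi s hj)
  · exact lt_irrefl s (hE.2 j i h s hj s hi)

lemma le_of_le_max_gamma {γ x c : ℝ} (hγ1 : γ < 1) (hx : 0 ≤ x) (hc : 0 ≤ c)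
    (h : x ≤ max c (γ * x)) : x ≤ c := by
  rcases le_max_iff.1 h with h' | h'
  · exact h'
  · nlinarith

lemma N_le_l1 {p q γ : ℝ} (hp : 1 < p) (hpq : 1 / p + 1 / q = 1) (hγ0 : 0 < γ) (hγ1 : γ < 1)
    {N : (ℕ →₀ ℝ) → ℝ} (hN : TiEq q γ N) :
    ∀ k (a : ℕ →₀ ℝ), a.support.card ≤ k → N a ≤ ∑ i ∈ a.support, |a i| := by
  intro k
  induction k with
  | zero =>
    intro a ha
    have : a = 0 := by
      rw [← Finsupp.support_eq_empty, ← Finset.card_eq_zero]; omega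
    subst this
    rw [N_zero hp hpq hγ0 hN]
    exact Finset.sum_nonneg fun i _ => abs_nonneg _
  | succ k ih =>
    intro a ha
    set L : ℝ := ∑ i ∈ a.support, |a i| with hL
    have hLnn : 0 ≤ L := Finset.sum_nonneg fun i _ => abs_nonneg _
    have key : ∀ x ∈ tiSet q γ N a, x ≤ max L (γ * N a) := by
      rintro x ⟨n, hn, E, hE, rfl⟩
      by_cases hA : ∃ j0 : Fin n, ∀ i ∈ a.support, i ∈ E j0
      · obtain ⟨j0, hj0⟩ := hA
        have hsum : (∑ j, N (restr (E j) a)) = N a := by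
          rw [Finset.sum_eq_single_of_mem j0 (Finset.mem_univ _)]
          · rw [restr_eq_self _ _ hj0]
          · intro j _ hj
            rw [restr_eq_zero _ _ ?_, N_zero hp hpq hγ0 hN]
            intro i hi
            by_contra h'
            exact consec_disjoint hE hj hi (hj0 i (Finsupp.mem_support_iff.2 h'))
        rw [hsum]
        refine le_trans ?_ (le_max_right _ _)
        rw [div_le_iff₀ (by positivity : (0:ℝ) < (n:ℝ) ^ (1/q))]
        calc γ * N a ≤ γ * N a * 1 := by ring_nf; exact le_refl _
        _ ≤ γ * N a * (n:ℝ) ^ (1/q) := by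
            apply mul_le_mul_of_nonneg_left (one_le_rpow_q hp hpq hn)
            exact mul_nonneg hγ0.le (N_nonneg hN a)
      · push_neg at hA
        have hpiece : ∀ j : Fin n, N (restr (E j) a) ≤ ∑ i ∈ a.support.filter (· ∈ E j), |a i| := by
          intro j
          obtain ⟨i0, hi0, hi0'⟩ := hA j
          have hcard : (restr (E j) a).support.card ≤ k := by
            have hss : (restr (E j) a).support ⊂ a.support := by
              rw [restr_support]
              refine ⟨Finset.filter_subset _ _, fun hsub => hi0' ?_⟩
              exact (Finset.mem_filter.1 (hsub hi0)).2
            have := Finset.card_lt_card hss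
            omega
          calc N (restr (E j) a) ≤ ∑ i ∈ (restr (E j) a).support, |restr (E j) a i| :=
              ih _ hcard
          _ = ∑ i ∈ a.support.filter (· ∈ E j), |a i| := by
              rw [restr_support]
              refine Finset.sum_congr rfl fun i hi => ?_
              rw [restr_apply, if_pos (Finset.mem_filter.1 hi).2]
        have hdisj : (↑(Finset.univ : Finset (Fin n)) : Set (Fin n)).PairwiseDisjoint
            (fun j => a.support.filter (· ∈ E j)) := by
          intro i _ j _ hij
          simp only [Function.onFun]
          rw [Finset.disjoint_left]
          intro s hs hs'
          exact consec_disjoint hE hij (Finset.mem_filter.1 hs).2 (Finset.mem_filter.1 hs').2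
        have hsum2 : (∑ j : Fin n, ∑ i ∈ a.support.filter (· ∈ E j), |a i|) ≤ L := by
          rw [← Finset.sum_biUnion hdisj]
          refine Finset.sum_le_sum_of_subset_of_nonneg ?_ (fun i _ _ => abs_nonneg _)
          intro i hi
          exact (Finset.mem_filter.1 (Finset.mem_biUnion.1 hi).choose_spec.2).1
        have hT : (∑ j, N (restr (E j) a)) ≤ L :=
          le_trans (Finset.sum_le_sum fun j _ => hpiece j) hsum2
        refine le_trans ?_ (le_max_left _ _)
        have hTnn : 0 ≤ ∑ j, N (restr (E j) a) :=
          Finset.sum_nonneg fun j _ => N_nonneg hN _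
        calc γ * (∑ j, N (restr (E j) a)) / (n:ℝ) ^ (1/q)
            ≤ γ * (∑ j, N (restr (E j) a)) / 1 := by
              apply div_le_div_of_nonneg_left (by positivity) one_pos
              -- wrong direction? need 1 ≤ n^(1/q)
              exact one_le_rpow_q hp hpq hn
        _ = γ * (∑ j, N (restr (E j) a)) := by rw [div_one]
        _ ≤ 1 * L := by
            apply mul_le_mul hγ1.le hT hTnn one_pos.le
        _ = L := one_mul L
    have hS : sSup (tiSet q γ N a) ≤ max L (γ * N a) :=
      Real.sSup_le key (le_trans hLnn (le_max_left _ _))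
    have hI : (⨆ i, |a i|) ≤ L := ciSup_le (abs_le_sum a)
    have : N a ≤ max L (γ * N a) := by
      conv_lhs => rw [hN a]
      exact max_le (le_trans hI (le_max_left _ _)) hS
    exact le_of_le_max_gamma hγ1 (N_nonneg hN a) hLnn this


lemma piece_l1 {p q γ : ℝ} (hp : 1 < p) (hpq : 1 / p + 1 / q = 1) (hγ0 : 0 < γ) (hγ1 : γ < 1)
    {N : (ℕ →₀ ℝ) → ℝ} (hN : TiEq q γ N) (a : ℕ →₀ ℝ) (E : Finset ℕ) :
    N (restr E a) ≤ ∑ i ∈ a.support.filter (· ∈ E), |a i| := by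
  calc N (restr E a) ≤ ∑ i ∈ (restr E a).support, |restr E a i| :=
      N_le_l1 hp hpq hγ0 hγ1 hN _ _ le_rfl
  _ = ∑ i ∈ a.support.filter (· ∈ E), |a i| := by
      rw [restr_support]
      refine Finset.sum_congr rfl fun i hi => ?_
      rw [restr_apply, if_pos (Finset.mem_filter.1 hi).2]

lemma sum_pieces_le {n : ℕ} {E : Fin n → Finset ℕ} (hE : Consec E) (a : ℕ →₀ ℝ) :
    (∑ j : Fin n, ∑ i ∈ a.support.filter (· ∈ E j), |a i|) ≤ ∑ i ∈ a.support, |a i| := by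
  have hdisj : (↑(Finset.univ : Finset (Fin n)) : Set (Fin n)).PairwiseDisjoint
      (fun j => a.support.filter (· ∈ E j)) := by
    intro i _ j _ hij
    simp only [Function.onFun]
    rw [Finset.disjoint_left]
    intro s hs hs'
    exact consec_disjoint hE hij (Finset.mem_filter.1 hs).2 (Finset.mem_filter.1 hs').2
  rw [← Finset.sum_biUnion hdisj]
  refine Finset.sum_le_sum_of_subset_of_nonneg ?_ (fun i _ _ => abs_nonneg _)
  intro i hi
  exact (Finset.mem_filter.1 (Finset.mem_biUnion.1 hi).choose_spec.2).1

lemma tiSet_bddAbove {p q γ : ℝ} (hp : 1 < p) (hpq : 1 / p + 1 / q = 1) (hγ0 : 0 < γ)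
    (hγ1 : γ < 1) {N : (ℕ →₀ ℝ) → ℝ} (hN : TiEq q γ N) (a : ℕ →₀ ℝ) :
    BddAbove (tiSet q γ N a) := by
  refine ⟨∑ i ∈ a.support, |a i|, ?_⟩
  rintro x ⟨n, hn, E, hE, rfl⟩
  have hT : (∑ j, N (restr (E j) a)) ≤ ∑ i ∈ a.support, |a i| :=
    le_trans (Finset.sum_le_sum fun j _ => piece_l1 hp hpq hγ0 hγ1 hN a (E j))
      (sum_pieces_le hE a)
  have hTnn : 0 ≤ ∑ j, N (restr (E j) a) := Finset.sum_nonneg fun j _ => N_nonneg hN _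
  calc γ * (∑ j, N (restr (E j) a)) / (n:ℝ) ^ (1/q)
      ≤ γ * (∑ j, N (restr (E j) a)) / 1 :=
        div_le_div_of_nonneg_left (by positivity) one_pos (one_le_rpow_q hp hpq hn)
  _ = γ * (∑ j, N (restr (E j) a)) := div_one _
  _ ≤ 1 * (∑ i ∈ a.support, |a i|) := mul_le_mul hγ1.le hT hTnn one_pos.le
  _ = ∑ i ∈ a.support, |a i| := one_mul _

lemma iSup_spread {π : ℕ → ℕ} {a b : ℕ →₀ ℝ}
    (hb1 : ∀ n, b (π n) = a n) (hb2 : ∀ k, k ∉ Set.range π → b k = 0) :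
    (⨆ i, |b i|) = ⨆ i, |a i| := by
  apply le_antisymm
  · refine ciSup_le fun k => ?_
    by_cases hr : k ∈ Set.range π
    · obtain ⟨m, rfl⟩ := hr
      rw [hb1]
      exact le_ciSup (bdd_abs a) m
    · rw [hb2 k hr, abs_zero]
      exact Real.iSup_nonneg fun i => abs_nonneg _
  · refine ciSup_le fun m => ?_
    rw [← hb1 m]
    exact le_ciSup (bdd_abs b) (π m)


lemma spread_eq {p q γ : ℝ} (hp : 1 < p) (hpq : 1 / p + 1 / q = 1) (hγ0 : 0 < γ)
    (hγ1 : γ < 1) {N : (ℕ →₀ ℝ) → ℝ} (hN : TiEq q γ N) :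
    ∀ k (π : ℕ → ℕ), StrictMono π → ∀ (a b : ℕ →₀ ℝ),
      (∀ n, b (π n) = a n) → (∀ j, j ∉ Set.range π → b j = 0) →
      a.support.card ≤ k → N b = N a := by
  intro k
  induction k with
  | zero =>
    intro π hπ a b hb1 hb2 hcard
    have ha : a = 0 := by
      rw [← Finsupp.support_eq_empty, ← Finset.card_eq_zero]; omega
    subst ha
    have hb : b = 0 := by
      ext i
      by_cases hr : i ∈ Set.range π
      · obtain ⟨m, rfl⟩ := hr; rw [hb1]; rfl
      · rw [hb2 i hr]; rfl
    rw [hb]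
  | succ k ih =>
    intro π hπ a b hb1 hb2 hcard
    -- the ∞-sup parts agree
    have hIs : (⨆ i, |b i|) = ⨆ i, |a i| := iSup_spread hb1 hb2
    have hIa_le_Na : (⨆ i, |a i|) ≤ N a := by rw [hN a]; exact le_max_left _ _
    have hIa_le_Nb : (⨆ i, |a i|) ≤ N b := by rw [hN b, hIs]; exact le_max_left _ _
    -- Forward direction: elements of tiSet for b
    have hforward : ∀ x ∈ tiSet q γ N b, x ≤ max (N a) (γ * N b) := by
      rintro x ⟨n, hn, E, hE, rfl⟩
      by_cases hA : ∃ j0 : Fin n, ∀ i ∈ a.support, π i ∈ E j0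
      · obtain ⟨j0, hj0⟩ := hA
        -- b is supported inside E j0 : restr (E j0) b = b, the rest vanish
        have hbmem : ∀ i, b i ≠ 0 → ∃ m ∈ a.support, π m = i := by
          intro i hi
          by_cases hr : i ∈ Set.range π
          · obtain ⟨m, rfl⟩ := hr
            exact ⟨m, Finsupp.mem_support_iff.2 (by rw [← hb1 m]; exact hi), rfl⟩
          · exact absurd (hb2 i hr) hi
        have hfull : restr (E j0) b = b := by
          ext i
          rw [restr_apply]
          by_cases hi : i ∈ E j0
          · rw [if_pos hi]
          · rw [if_neg hi]
            by_contra hne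
            obtain ⟨m, hm, rfl⟩ := hbmem i fun h => hne h.symm
            exact hi (hj0 m hm)
        have hrest : ∀ j : Fin n, j ≠ j0 → restr (E j) b = 0 := by
          intro j hj
          refine restr_eq_zero _ _ fun i hiE => ?_
          by_contra hne
          obtain ⟨m, hm, rfl⟩ := hbmem i hne
          exact consec_disjoint hE hj hiE (hj0 m hm)
        have hsum : (∑ j, N (restr (E j) b)) = N b := by
          rw [Finset.sum_eq_single_of_mem j0 (Finset.mem_univ _)
            (fun j _ hj => by rw [hrest j hj, N_zero hp hpq hγ0 hN]), hfull]
        rw [hsum]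
        refine le_trans ?_ (le_max_right _ _)
        calc γ * N b / (n:ℝ) ^ (1/q) ≤ γ * N b / 1 :=
            div_le_div_of_nonneg_left (mul_nonneg hγ0.le (N_nonneg hN b)) one_pos
              (one_le_rpow_q hp hpq hn)
        _ = γ * N b := div_one _
      · push_neg at hA
        -- preimage family
        set F : Fin n → Finset ℕ := fun j => (E j).preimage π (hπ.injective.injOn) with hF
        have hFmem : ∀ (j : Fin n) (m : ℕ), m ∈ F j ↔ π m ∈ E j := by
          intro j m; simp [hF, Finset.mem_preimage]
        -- each restricted pair is again a spread pair
        have hIH : ∀ j : Fin n, N (restr (E j) b) = N (restr (F j) a) := by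
          intro j
          refine ih π hπ (restr (F j) a) (restr (E j) b) ?_ ?_ ?_
          · intro m
            rw [restr_apply, restr_apply, hb1]
            by_cases hm : m ∈ F j
            · rw [if_pos ((hFmem j m).1 hm), if_pos hm]
            · rw [if_neg (fun h => hm ((hFmem j m).2 h)), if_neg hm]
          · intro i hr
            rw [restr_apply]
            by_cases hi : i ∈ E j
            · rw [if_pos hi, hb2 i hr]
            · rw [if_neg hi]
          · obtain ⟨i0, hi0, hi0'⟩ := hA j
            have hss : (restr (F j) a).support ⊂ a.support := by
              rw [restr_support]
              refine ⟨Finset.filter_subset _ _, fun hsub => ?_⟩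
              exact hi0' ((hFmem j i0).1 (Finset.mem_filter.1 (hsub hi0)).2)
            have := Finset.card_lt_card hss
            omega
        -- consecutive structure of the nonempty preimages
        have hFord : ∀ i j : Fin n, i < j → ∀ s ∈ F i, ∀ t ∈ F j, s < t := by
          intro i j hij s hs t ht
          exact hπ.lt_iff_lt.1 (hE.2 i j hij _ ((hFmem i s).1 hs) _ ((hFmem j t).1 ht))
        set s : Finset (Fin n) := Finset.univ.filter (fun j => (F j).Nonempty) with hs
        have hzero : ∀ j : Fin n, j ∉ s → N (restr (F j) a) = 0 := by
          intro j hj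
          rw [restr_eq_zero _ _ fun i hi => ?_, N_zero hp hpq hγ0 hN]
          exact absurd (Finset.mem_filter.2 ⟨Finset.mem_univ _, ⟨i, hi⟩⟩) hj
        have hsum_s : (∑ j, N (restr (F j) a)) = ∑ j ∈ s, N (restr (F j) a) :=
          (Finset.sum_subset (Finset.subset_univ s) fun j _ hj => hzero j hj).symm
        rcases Finset.eq_empty_or_nonempty s with hse | hse
        · -- everything vanishes
          have : (∑ j, N (restr (E j) b)) = 0 := by
            rw [Finset.sum_congr rfl fun j _ => hIH j, hsum_s, hse, Finset.sum_empty]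
          rw [this]
          refine le_trans ?_ (le_max_left _ _)
          rw [mul_zero, zero_div]
          exact N_nonneg hN a
        · set m : ℕ := s.card with hm
          have hmpos : 0 < m := Finset.card_pos.2 hse
          set e := s.orderIsoOfFin rfl with he
          set G : Fin m → Finset ℕ := fun i => F (e i) with hG
          have hGconsec : Consec G := by
            constructor
            · intro i
              have : (e i : Fin n) ∈ s := (e i).2
              exact (Finset.mem_filter.1 this).2
            · intro i j hij u hu v hv
              refine hFord (e i) (e j) ?_ u hu v hv
              exact_mod_cast e.strictMono hij
          have hsum_m : (∑ j ∈ s, N (restr (F j) a)) = ∑ i : Fin m, N (restr (G i) a) := by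
            rw [← Finset.sum_coe_sort s (fun j => N (restr (F j) a))]
            exact (Equiv.sum_comp e.toEquiv fun x => N (restr (F x) a)).symm
          have hTnn : 0 ≤ ∑ i : Fin m, N (restr (G i) a) :=
            Finset.sum_nonneg fun i _ => N_nonneg hN _
          have hmem : γ * (∑ i : Fin m, N (restr (G i) a)) / (m:ℝ) ^ (1/q) ∈ tiSet q γ N a :=
            ⟨m, hmpos, G, hGconsec, rfl⟩
          have hya : γ * (∑ i : Fin m, N (restr (G i) a)) / (m:ℝ) ^ (1/q) ≤ N a :=
            le_trans (le_csSup (tiSet_bddAbove hp hpq hγ0 hγ1 hN a) hmem)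
              (sSup_tiSet_le hN a)
          refine le_trans ?_ (le_trans hya (le_max_left _ _))
          rw [Finset.sum_congr rfl fun j _ => hIH j, hsum_s, hsum_m]
          have hm0 : (0:ℝ) < (m:ℝ) := by exact_mod_cast hmpos
          refine div_le_div_of_nonneg_left (mul_nonneg hγ0.le hTnn)
            (Real.rpow_pos_of_pos hm0 _) ?_
          have : (m:ℝ) ≤ (n:ℝ) := by
            have : m ≤ n := le_trans (Finset.card_filter_le _ _) (by simp)
            exact_mod_cast this
          exact Real.rpow_le_rpow hm0.le this (q_inv_pos hp hpq).le
    have hNb_le : N b ≤ N a := by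
      have h1 : N b ≤ max (N a) (γ * N b) := by
        conv_lhs => rw [hN b]
        refine max_le ?_ (Real.sSup_le hforward (le_trans (N_nonneg hN a) (le_max_left _ _)))
        rw [hIs]
        exact le_trans hIa_le_Na (le_max_left _ _)
      exact le_of_le_max_gamma hγ1 (N_nonneg hN b) (N_nonneg hN a) h1
    -- backward direction: elements of tiSet for a
    have hbackward : ∀ x ∈ tiSet q γ N a, x ≤ max (N b) (γ * N a) := by
      rintro x ⟨n, hn, F, hF, rfl⟩
      by_cases hA : ∃ j0 : Fin n, ∀ i ∈ a.support, i ∈ F j0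
      · obtain ⟨j0, hj0⟩ := hA
        have hsum : (∑ j, N (restr (F j) a)) = N a := by
          rw [Finset.sum_eq_single_of_mem j0 (Finset.mem_univ _)
            (fun j _ hj => by
              rw [restr_eq_zero _ _ fun i hi => ?_, N_zero hp hpq hγ0 hN]
              by_contra hne
              exact consec_disjoint hF hj hi (hj0 i (Finsupp.mem_support_iff.2 hne))),
            restr_eq_self _ _ hj0]
        rw [hsum]
        refine le_trans ?_ (le_max_right _ _)
        calc γ * N a / (n:ℝ) ^ (1/q) ≤ γ * N a / 1 :=
            div_le_div_of_nonneg_left (mul_nonneg hγ0.le (N_nonneg hN a)) one_pos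
              (one_le_rpow_q hp hpq hn)
        _ = γ * N a := div_one _
      · push_neg at hA
        set E : Fin n → Finset ℕ := fun j => (F j).image π with hEdef
        have hIH : ∀ j : Fin n, N (restr (E j) b) = N (restr (F j) a) := by
          intro j
          have hmemE : ∀ m : ℕ, π m ∈ E j ↔ m ∈ F j := by
            intro m
            simp only [hEdef, Finset.mem_image]
            exact ⟨fun ⟨u, hu, he⟩ => (hπ.injective he) ▸ hu, fun h => ⟨m, h, rfl⟩⟩
          refine ih π hπ (restr (F j) a) (restr (E j) b) ?_ ?_ ?_
          · intro m
            rw [restr_apply, restr_apply, hb1]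
            by_cases hm : m ∈ F j
            · rw [if_pos ((hmemE m).2 hm), if_pos hm]
            · rw [if_neg (fun h => hm ((hmemE m).1 h)), if_neg hm]
          · intro i hr
            rw [restr_apply]
            by_cases hi : i ∈ E j
            · rw [if_pos hi, hb2 i hr]
            · rw [if_neg hi]
          · obtain ⟨i0, hi0, hi0'⟩ := hA j
            have hss : (restr (F j) a).support ⊂ a.support := by
              rw [restr_support]
              exact ⟨Finset.filter_subset _ _,
                fun hsub => hi0' (Finset.mem_filter.1 (hsub hi0)).2⟩
            have := Finset.card_lt_card hss
            omega
        have hEconsec : Consec E := by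
          constructor
          · intro j; exact ((hF.1 j).image π)
          · rintro i j hij s hsmem t htmem
            obtain ⟨u, hu, rfl⟩ := Finset.mem_image.1 hsmem
            obtain ⟨v, hv, rfl⟩ := Finset.mem_image.1 htmem
            exact hπ (hF.2 i j hij u hu v hv)
        have hmem : γ * (∑ j, N (restr (F j) a)) / (n:ℝ) ^ (1/q) ∈ tiSet q γ N b := by
          refine ⟨n, hn, E, hEconsec, ?_⟩
          rw [Finset.sum_congr rfl fun j _ => (hIH j)]
        exact le_trans (le_trans (le_csSup (tiSet_bddAbove hp hpq hγ0 hγ1 hN b) hmem)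
          (sSup_tiSet_le hN b)) (le_max_left _ _)
    have hNa_le : N a ≤ N b := by
      have h1 : N a ≤ max (N b) (γ * N a) := by
        conv_lhs => rw [hN a]
        refine max_le ?_ (Real.sSup_le hbackward (le_trans (N_nonneg hN b) (le_max_left _ _)))
        exact le_trans hIa_le_Nb (le_max_left _ _)
      exact le_of_le_max_gamma hγ1 (N_nonneg hN a) (N_nonneg hN b) h1
    exact le_antisymm hNb_le hNa_le


/-- the unit vector basis of `Ti(p,γ)` is 1-subsymmetric: spreading the
coefficients of `a` along any strictly increasing map preserves the norm. -/
theorem stmt2 (p q γ : ℝ) (hp : 1 < p) (hpq : 1 / p + 1 / q = 1)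
    (hγ0 : 0 < γ) (hγ1 : γ < 1) (N : (ℕ →₀ ℝ) → ℝ) (hN : TiEq q γ N)
    (π : ℕ → ℕ) (hπ : StrictMono π) (a b : ℕ →₀ ℝ)
    (hb1 : ∀ n, b (π n) = a n) (hb2 : ∀ k, k ∉ Set.range π → b k = 0) :
    N b = N a := by
  exact spread_eq hp hpq hγ0 hγ1 hN a.support.card π hπ a b hb1 hb2 le_rfl
end
end

section
/- Let X be a reflexive Banach space with a 1-unconditional normalized basis (eᵢ) such that (eᵢ) is K-dominated by every normalized block basis of (eᵢ) (K ≥ 1). Then in X* the dual basis (eᵢ*) K-dominates every normalized block basis (xᵢ*) of (eᵢ*): for all n and scalars (aᵢ), ‖∑ᵢ₌₁ⁿ aᵢ xᵢ*‖ ≤ K‖∑ᵢ₌₁ⁿ aᵢ eᵢ*‖. -/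
open Finset

noncomputable section

lemma b_apply' {X : Type*} [NormedAddCommGroup X] [NormedSpace ℝ X]
    (e : ℕ → X) (b : ℕ → X →L[ℝ] ℝ)
    (hbio : ∀ i j, b i (e j) = if i = j then 1 else 0)
    (t : Finset ℕ) (q : ℕ → ℝ) (i : ℕ) :
    b i (∑ k ∈ t, q k • e k) = if i ∈ t then q i else 0 := by
  rw [map_sum]
  simp only [map_smul, hbio, smul_eq_mul, mul_ite, mul_one, mul_zero]
  exact Finset.sum_ite_eq t i q

lemma mono_aux {X : Type*} [NormedAddCommGroup X] [NormedSpace ℝ X]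
    (e : ℕ → X)
    (huncond : ∀ (s : Finset ℕ) (a ε : ℕ → ℝ), (∀ n, ε n = 1 ∨ ε n = -1) →
      ‖∑ i ∈ s, (ε i * a i) • e i‖ = ‖∑ i ∈ s, a i • e i‖)
    (s : Finset ℕ) (p : ℕ → ℝ) :
    ∀ (t : Finset ℕ) (θ : ℕ → ℝ), (∀ i ∈ t, |θ i| ≤ 1) →
      (∀ i ∈ s, i ∉ t → θ i = 1 ∨ θ i = -1) →
      ‖∑ i ∈ s, (θ i * p i) • e i‖ ≤ ‖∑ i ∈ s, p i • e i‖ := by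
  intro t
  induction t using Finset.induction_on with
  | empty =>
    intro θ _ hsign
    have hε : ∀ m, (if m ∈ s then θ m else 1) = 1 ∨ (if m ∈ s then θ m else 1) = -1 := by
      intro m
      by_cases hm : m ∈ s
      · simpa [hm] using hsign m hm (Finset.notMem_empty m)
      · simp [hm]
    have := huncond s p (fun m => if m ∈ s then θ m else 1) hε
    rw [← this]
    refine le_of_eq (congrArg _ (Finset.sum_congr rfl fun i hi => ?_))
    rw [if_pos hi]
  | @insert j t' hj ih =>
    intro θ hθ hsign
    set lam : ℝ := (1 + θ j) / 2 with hlam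
    have habs : |θ j| ≤ 1 := hθ j (Finset.mem_insert_self j t')
    have h1 : -1 ≤ θ j := (abs_le.mp habs).1
    have h2 : θ j ≤ 1 := (abs_le.mp habs).2
    have hlam0 : 0 ≤ lam := by rw [hlam]; linarith
    have hlam1 : 0 ≤ 1 - lam := by rw [hlam]; linarith
    set θp := Function.update θ j 1 with hθp
    have hθp1 : ∀ i ∈ t', |θp i| ≤ 1 := by
      intro i hi
      rw [hθp, Function.update_of_ne (fun h : i = j => hj (h ▸ hi))]
      exact hθ i (Finset.mem_insert_of_mem hi)
    have hθp2 : ∀ i ∈ s, i ∉ t' → θp i = 1 ∨ θp i = -1 := by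
      intro i his hit
      by_cases hij : i = j
      · subst hij; left; rw [hθp, Function.update_self]
      · rw [hθp, Function.update_of_ne hij]
        exact hsign i his (by simp [Finset.mem_insert, hij, hit])
    set θm := Function.update θ j (-1) with hθm
    have hθm1 : ∀ i ∈ t', |θm i| ≤ 1 := by
      intro i hi
      rw [hθm, Function.update_of_ne (fun h : i = j => hj (h ▸ hi))]
      exact hθ i (Finset.mem_insert_of_mem hi)
    have hθm2 : ∀ i ∈ s, i ∉ t' → θm i = 1 ∨ θm i = -1 := by
      intro i his hit
      by_cases hij : i = j
      · subst hij; right; rw [hθm, Function.update_self]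
      · rw [hθm, Function.update_of_ne hij]
        exact hsign i his (by simp [Finset.mem_insert, hij, hit])
    have hid : ∑ i ∈ s, (θ i * p i) • e i
        = lam • (∑ i ∈ s, (θp i * p i) • e i) + (1 - lam) • (∑ i ∈ s, (θm i * p i) • e i) := by
      rw [Finset.smul_sum, Finset.smul_sum, ← Finset.sum_add_distrib]
      refine Finset.sum_congr rfl fun i _ => ?_
      rw [smul_smul, smul_smul, ← add_smul]
      congr 1
      by_cases hij : i = j
      · subst hij
        rw [hθp, hθm, Function.update_self, Function.update_self, hlam]; ring
      · rw [hθp, hθm, Function.update_of_ne hij, Function.update_of_ne hij]; ring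
    calc ‖∑ i ∈ s, (θ i * p i) • e i‖
        = ‖lam • (∑ i ∈ s, (θp i * p i) • e i) + (1 - lam) • (∑ i ∈ s, (θm i * p i) • e i)‖ := by
          rw [hid]
      _ ≤ ‖lam • (∑ i ∈ s, (θp i * p i) • e i)‖ + ‖(1 - lam) • (∑ i ∈ s, (θm i * p i) • e i)‖ :=
          norm_add_le _ _
      _ = lam * ‖∑ i ∈ s, (θp i * p i) • e i‖ + (1 - lam) * ‖∑ i ∈ s, (θm i * p i) • e i‖ := by
          rw [norm_smul, norm_smul, Real.norm_of_nonneg hlam0, Real.norm_of_nonneg hlam1]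
      _ ≤ lam * ‖∑ i ∈ s, p i • e i‖ + (1 - lam) * ‖∑ i ∈ s, p i • e i‖ :=
          add_le_add (mul_le_mul_of_nonneg_left (ih θp hθp1 hθp2) hlam0)
            (mul_le_mul_of_nonneg_left (ih θm hθm1 hθm2) hlam1)
      _ = ‖∑ i ∈ s, p i • e i‖ := by ring

lemma mono' {X : Type*} [NormedAddCommGroup X] [NormedSpace ℝ X]
    (e : ℕ → X)
    (huncond : ∀ (s : Finset ℕ) (a ε : ℕ → ℝ), (∀ n, ε n = 1 ∨ ε n = -1) →
      ‖∑ i ∈ s, (ε i * a i) • e i‖ = ‖∑ i ∈ s, a i • e i‖)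
    (s : Finset ℕ) (p θ : ℕ → ℝ) (hθ : ∀ i ∈ s, |θ i| ≤ 1) :
    ‖∑ i ∈ s, (θ i * p i) • e i‖ ≤ ‖∑ i ∈ s, p i • e i‖ :=
  mono_aux e huncond s p s θ hθ (fun i his hit => absurd his hit)


/-- if `X` is a reflexive Banach space with a 1-unconditional normalized basis
`(eᵢ)` which is `K`-dominated by every normalized block basis of `(eᵢ)`, then in `X^*` the
dual basis `(bᵢ)` `K`-dominates every normalized block basis `(xsᵢ)` of `(bᵢ)`. -/
theorem stmt7 {X : Type*} [NormedAddCommGroup X] [NormedSpace ℝ X] [CompleteSpace X]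
    (hrefl : Function.Surjective (NormedSpace.inclusionInDoubleDual ℝ X))
    (K : ℝ) (hK : 1 ≤ K)
    (e : ℕ → X) (b : ℕ → X →L[ℝ] ℝ)
    (henorm : ∀ i, ‖e i‖ = 1)
    (hbio : ∀ i j, b i (e j) = if i = j then 1 else 0)
    (hdense : DenseRange fun a : ℕ →₀ ℝ => a.sum fun i c => c • e i)
    (huncond : ∀ (s : Finset ℕ) (a ε : ℕ → ℝ), (∀ n, ε n = 1 ∨ ε n = -1) →
      ‖∑ i ∈ s, (ε i * a i) • e i‖ = ‖∑ i ∈ s, a i • e i‖)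
    (hdom : ∀ (z : ℕ → X) (B : ℕ → Finset ℕ) (c : ℕ → ℝ),
      (∀ j, z j = ∑ i ∈ B j, c i • e i) → (∀ j, (B j).Nonempty) →
      (∀ j k : ℕ, j < k → ∀ s ∈ B j, ∀ t ∈ B k, s < t) → (∀ j, ‖z j‖ = 1) →
      ∀ (n : ℕ) (a : Fin n → ℝ), ‖∑ j, a j • e (j : ℕ)‖ ≤ K * ‖∑ j, a j • z (j : ℕ)‖)
    (xs : ℕ → X →L[ℝ] ℝ) (A : ℕ → Finset ℕ) (co : ℕ → ℝ)
    (hxs : ∀ j, xs j = ∑ i ∈ A j, co i • b i)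
    (hAne : ∀ j, (A j).Nonempty)
    (hA : ∀ j k : ℕ, j < k → ∀ s ∈ A j, ∀ t ∈ A k, s < t)
    (hxn : ∀ j, ‖xs j‖ = 1) :
    ∀ (n : ℕ) (a : Fin n → ℝ),
      ‖∑ j, a j • xs (j : ℕ)‖ ≤ K * ‖∑ j, a j • b (j : ℕ)‖ := by
  intro n a
  have hK0 : (0:ℝ) ≤ K := le_trans zero_le_one hK
  have hM0 : (0:ℝ) ≤ ‖∑ j : Fin n, a j • b (j : ℕ)‖ := norm_nonneg _
  have hdisj : ∀ i j k, i ∈ A j → i ∈ A k → j = k := by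
    intro i j k hij hik
    by_contra hne
    rcases lt_or_gt_of_ne hne with h | h
    · exact lt_irrefl i (hA j k h i hij i hik)
    · exact lt_irrefl i (hA k j h i hik i hij)
  have core : ∀ (s : Finset ℕ) (p : ℕ → ℝ),
      ‖(∑ j : Fin n, a j • xs (j : ℕ)) (∑ i ∈ s, p i • e i)‖
        ≤ K * ‖∑ j : Fin n, a j • b (j : ℕ)‖ * ‖∑ i ∈ s, p i • e i‖ := by
    intro s p
    classical
    set w : X := ∑ i ∈ s, p i • e i with hw
    set wf : ℕ → X := fun j => ∑ i ∈ A j ∩ s, p i • e i with hwf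
    set d : ℕ → ℝ := fun j => ∑ i ∈ A j ∩ s, co i * p i with hd
    have hxapp : ∀ (j : ℕ) (t : Finset ℕ) (q : ℕ → ℝ),
        xs j (∑ k ∈ t, q k • e k) = ∑ i ∈ A j, (if i ∈ t then co i * q i else 0) := by
      intro j t q
      rw [hxs j, ContinuousLinearMap.sum_apply]
      refine Finset.sum_congr rfl fun i _ => ?_
      rw [ContinuousLinearMap.smul_apply, b_apply' e b hbio, smul_eq_mul, mul_ite, mul_zero]
    have hxw : ∀ j, xs j w = d j := by
      intro j
      rw [hw, hxapp, Finset.sum_ite_mem, hd]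
    have hxwf : ∀ j, xs j (wf j) = d j := by
      intro j
      rw [hwf]
      simp only []
      rw [hxapp, Finset.sum_ite_mem, ← Finset.inter_assoc, Finset.inter_self, hd]
    have hdle : ∀ j, |d j| ≤ ‖wf j‖ := by
      intro j
      rw [← hxwf j]
      calc |xs j (wf j)| = ‖xs j (wf j)‖ := rfl
        _ ≤ ‖xs j‖ * ‖wf j‖ := (xs j).le_opNorm _
        _ = ‖wf j‖ := by rw [hxn j, one_mul]
    -- block basis
    set B : ℕ → Finset ℕ := fun j => if ‖wf j‖ = 0 then A j else A j ∩ s with hB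
    set z : ℕ → X := fun j => if ‖wf j‖ = 0 then e ((A j).min' (hAne j)) else ‖wf j‖⁻¹ • wf j
      with hz
    set cc : ℕ → ℝ := fun i => if h : ∃ j, i ∈ A j then
        (if ‖wf h.choose‖ = 0 then (if i = (A h.choose).min' (hAne h.choose) then 1 else 0)
          else p i / ‖wf h.choose‖) else 0 with hcc
    have hccA : ∀ j i, i ∈ A j → cc i =
        if ‖wf j‖ = 0 then (if i = (A j).min' (hAne j) then 1 else 0) else p i / ‖wf j‖ := by
      intro j i hi
      have h : ∃ k, i ∈ A k := ⟨j, hi⟩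
      rw [hcc]
      simp only []
      rw [dif_pos h]
      have hcj : h.choose = j := hdisj i h.choose j h.choose_spec hi
      simp_rw [hcj]
    have hBsub : ∀ j, B j ⊆ A j := by
      intro j
      rw [hB]
      simp only []
      split
      · exact Finset.Subset.refl _
      · exact Finset.inter_subset_left
    have hBz : ∀ j, z j = ∑ i ∈ B j, cc i • e i := by
      intro j
      by_cases h0 : ‖wf j‖ = 0
      · rw [hz, hB]
        simp only [h0, if_true]
        have : ∀ i ∈ A j, cc i • e i = if ((A j).min' (hAne j)) = i then e i else 0 := by
          intro i hi
          rw [hccA j i hi, if_pos h0]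
          by_cases hm : i = (A j).min' (hAne j)
          · rw [if_pos hm, one_smul, if_pos hm.symm]
          · rw [if_neg hm, zero_smul, if_neg (fun h => hm h.symm)]
        rw [Finset.sum_congr rfl this, Finset.sum_ite_eq,
          if_pos ((A j).min'_mem (hAne j))]
      · rw [hz, hB]
        simp only [h0, if_false]
        rw [hwf]
        simp only []
        rw [Finset.smul_sum]
        refine Finset.sum_congr rfl fun i hi => ?_
        have hiA : i ∈ A j := (Finset.mem_inter.mp hi).1
        rw [hccA j i hiA, if_neg h0, smul_smul, div_eq_inv_mul]
    have hBne : ∀ j, (B j).Nonempty := by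
      intro j
      rw [hB]
      simp only []
      split
      · exact hAne j
      · rename_i h0
        by_contra hne
        rw [Finset.not_nonempty_iff_eq_empty] at hne
        apply h0
        rw [hwf]
        simp only [hne, Finset.sum_empty, norm_zero]
    have hBord : ∀ j k : ℕ, j < k → ∀ u ∈ B j, ∀ v ∈ B k, u < v := by
      intro j k hjk u hu v hv
      exact hA j k hjk u (hBsub j hu) v (hBsub k hv)
    have hzn : ∀ j, ‖z j‖ = 1 := by
      intro j
      rw [hz]
      simp only []
      by_cases h0 : ‖wf j‖ = 0
      · rw [if_pos h0, henorm]
      · rw [if_neg h0, norm_smul, norm_inv, norm_norm, inv_mul_cancel₀ h0]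
    have hdomc := hdom z B cc hBz hBne hBord hzn n (fun j => ‖wf (j : ℕ)‖)
    -- ∑ c z = ∑ wf
    have hsz : ∑ j : Fin n, ‖wf (j : ℕ)‖ • z (j : ℕ) = ∑ j : Fin n, wf (j : ℕ) := by
      refine Finset.sum_congr rfl fun j _ => ?_
      by_cases h0 : ‖wf (j : ℕ)‖ = 0
      · rw [h0, zero_smul, eq_comm, ← norm_eq_zero]
        exact h0
      · rw [hz]
        simp only []
        rw [if_neg h0, smul_smul, mul_inv_cancel₀ h0, one_smul]
    -- ‖∑ wf‖ ≤ ‖w‖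
    have hPw : ‖∑ j : Fin n, wf (j : ℕ)‖ ≤ ‖w‖ := by
      have hpd : Set.PairwiseDisjoint ↑(Finset.range n) (fun j => A j ∩ s) := by
        intro j hj k hk hne
        simp only [Function.onFun]
        rw [Finset.disjoint_left]
        intro i hij hik
        exact hne (hdisj i j k (Finset.mem_inter.mp hij).1 (Finset.mem_inter.mp hik).1)
      have h1 : ∑ j : Fin n, wf (j : ℕ) = ∑ j ∈ Finset.range n, wf j :=
        Fin.sum_univ_eq_sum_range _ n
      have h2 : ∑ j ∈ Finset.range n, wf j
          = ∑ i ∈ (Finset.range n).biUnion (fun j => A j ∩ s), p i • e i := by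
        rw [Finset.sum_biUnion hpd, hwf]
      have hset : (Finset.range n).biUnion (fun j => A j ∩ s)
          = s.filter (fun i => i ∈ (Finset.range n).biUnion A) := by
        ext i
        simp only [Finset.mem_biUnion, Finset.mem_inter, Finset.mem_filter, Finset.mem_range]
        tauto
      have h3 : ∑ i ∈ (Finset.range n).biUnion (fun j => A j ∩ s), p i • e i
          = ∑ i ∈ s, ((if i ∈ (Finset.range n).biUnion A then (1:ℝ) else 0) * p i) • e i := by
        rw [hset, Finset.sum_filter]
        refine Finset.sum_congr rfl fun i _ => ?_
        split <;> simp
      rw [h1, h2, h3, hw]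
      refine mono' e huncond s p _ fun i _ => ?_
      split <;> norm_num
    have hce : ‖∑ j : Fin n, ‖wf (j : ℕ)‖ • e (j : ℕ)‖ ≤ K * ‖w‖ := by
      refine le_trans hdomc ?_
      rw [hsz]
      exact mul_le_mul_of_nonneg_left hPw hK0
    -- ‖∑ d e‖ ≤ ‖∑ c e‖
    have hde : ‖∑ j : Fin n, d (j : ℕ) • e (j : ℕ)‖
        ≤ ‖∑ j : Fin n, ‖wf (j : ℕ)‖ • e (j : ℕ)‖ := by
      rw [Fin.sum_univ_eq_sum_range (fun j => d j • e j) n,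
        Fin.sum_univ_eq_sum_range (fun j => ‖wf j‖ • e j) n]
      have hθ : ∀ j, (if ‖wf j‖ = 0 then (0:ℝ) else d j / ‖wf j‖) * ‖wf j‖ = d j := by
        intro j
        by_cases h0 : ‖wf j‖ = 0
        · rw [if_pos h0, zero_mul, eq_comm, ← abs_nonpos_iff]
          rw [← h0]
          exact hdle j
        · rw [if_neg h0, div_mul_cancel₀ _ h0]
      have := mono' e huncond (Finset.range n) (fun j => ‖wf j‖)
        (fun j => if ‖wf j‖ = 0 then (0:ℝ) else d j / ‖wf j‖) ?_
      · simp only [hθ] at this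
        exact this
      · intro j _
        show |if ‖wf j‖ = 0 then (0:ℝ) else d j / ‖wf j‖| ≤ 1
        by_cases h0 : ‖wf j‖ = 0
        · rw [if_pos h0]; norm_num
        · rw [if_neg h0, abs_div, abs_of_nonneg (norm_nonneg _),
            div_le_one (lt_of_le_of_ne (norm_nonneg _) (Ne.symm h0))]
          exact hdle j
    -- the functional applied to the d-vector
    have hFv : (∑ j : Fin n, a j • b (j : ℕ)) (∑ k : Fin n, d (k : ℕ) • e (k : ℕ))
        = ∑ j : Fin n, a j * d (j : ℕ) := by
      rw [ContinuousLinearMap.sum_apply]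
      refine Finset.sum_congr rfl fun j _ => ?_
      rw [ContinuousLinearMap.smul_apply, smul_eq_mul, map_sum]
      congr 1
      have : ∀ k : Fin n, b (j : ℕ) (d (k : ℕ) • e (k : ℕ))
          = if j = k then d (k : ℕ) else 0 := by
        intro k
        rw [map_smul, hbio, smul_eq_mul]
        by_cases hjk : j = k
        · rw [if_pos hjk, if_pos (by rw [hjk]), mul_one]
        · rw [if_neg hjk, if_neg (fun h => hjk (Fin.val_injective h)), mul_zero]
      rw [Finset.sum_congr rfl fun k _ => this k, Finset.sum_ite_eq,
        if_pos (Finset.mem_univ j)]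
    have hFw : (∑ j : Fin n, a j • xs (j : ℕ)) w = ∑ j : Fin n, a j * d (j : ℕ) := by
      rw [ContinuousLinearMap.sum_apply]
      refine Finset.sum_congr rfl fun j _ => ?_
      rw [ContinuousLinearMap.smul_apply, smul_eq_mul, hxw]
    calc ‖(∑ j : Fin n, a j • xs (j : ℕ)) w‖
        = ‖(∑ j : Fin n, a j • b (j : ℕ)) (∑ k : Fin n, d (k : ℕ) • e (k : ℕ))‖ := by
          rw [hFw, hFv]
      _ ≤ ‖∑ j : Fin n, a j • b (j : ℕ)‖ * ‖∑ k : Fin n, d (k : ℕ) • e (k : ℕ)‖ :=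
          ContinuousLinearMap.le_opNorm _ _
      _ ≤ ‖∑ j : Fin n, a j • b (j : ℕ)‖ * (K * ‖w‖) :=
          mul_le_mul_of_nonneg_left (le_trans hde hce) hM0
      _ = K * ‖∑ j : Fin n, a j • b (j : ℕ)‖ * ‖w‖ := by ring
  -- extend by density
  refine ContinuousLinearMap.opNorm_le_bound _ (mul_nonneg hK0 hM0) ?_
  intro x
  have hclosed : IsClosed {y : X |
      ‖(∑ j : Fin n, a j • xs (j : ℕ)) y‖ ≤ K * ‖∑ j : Fin n, a j • b (j : ℕ)‖ * ‖y‖} :=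
    isClosed_le ((∑ j : Fin n, a j • xs (j : ℕ)).continuous.norm)
      (continuous_const.mul continuous_norm)
  have hx : x ∈ closure (Set.range fun a : ℕ →₀ ℝ => a.sum fun i c => c • e i) := hdense x
  have hsub : (Set.range fun a : ℕ →₀ ℝ => a.sum fun i c => c • e i) ⊆ {y : X |
      ‖(∑ j : Fin n, a j • xs (j : ℕ)) y‖ ≤ K * ‖∑ j : Fin n, a j • b (j : ℕ)‖ * ‖y‖} := by
    rintro - ⟨q, rfl⟩
    have hq : (q.sum fun i c => c • e i) = ∑ i ∈ q.support, q i • e i := rfl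
    simp only [Set.mem_setOf_eq, hq]
    exact core q.support q
  exact closure_minimal hsub hclosed hx
end
end

section
/- Let X* be the dual of a reflexive Banach space X with a 1-unconditional basis (eⱼ), and suppose every normalized block basis (xⱼ*) of (eⱼ*) satisfies the lower ℓ_q estimate ‖∑aⱼxⱼ*‖ ≥ 3^{−1/q}(∑|aⱼ|^q)^{1/q}. If some normalized block basis (xⱼ*) of (eⱼ*) is C-equivalent to the unit vector basis of ℓ_q, then the closed span of (xⱼ*) is complemented in X* by a projection of norm at most 3^{1/q}C, and consequently X contains an isomorphic copy of ℓ_p (1/p + 1/q = 1). -/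
open Finset

noncomputable section

section st12aux

variable {X : Type*} [NormedAddCommGroup X] [NormedSpace ℝ X]
  (e : ℕ → X) (b : ℕ → X →L[ℝ] ℝ)

private lemma st12_norm_hasSum_le {E : Type*} [SeminormedAddCommGroup E] {g : ℕ → E} {a : E}
    (hg : HasSum g a) {M : ℝ} (h : ∀ s : Finset ℕ, ‖∑ i ∈ s, g i‖ ≤ M) : ‖a‖ ≤ M :=
  le_of_tendsto ((continuous_norm.tendsto a).comp hg) (Filter.Eventually.of_forall h)

private lemma st12_proj_primal
    (hbio : ∀ i j, b i (e j) = if i = j then 1 else 0)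
    (hdense : DenseRange fun a : ℕ →₀ ℝ => a.sum fun i c => c • e i)
    (huncond : ∀ (s : Finset ℕ) (a ε : ℕ → ℝ), (∀ n, ε n = 1 ∨ ε n = -1) →
      ‖∑ i ∈ s, (ε i * a i) • e i‖ = ‖∑ i ∈ s, a i • e i‖)
    (s : Finset ℕ) (x : X) : ‖∑ i ∈ s, (b i x) • e i‖ ≤ ‖x‖ := by
  classical
  have hcl : IsClosed {x : X | ‖∑ i ∈ s, (b i x) • e i‖ ≤ ‖x‖} := by
    apply isClosed_le
    · exact (continuous_finset_sum s fun i _ => ((b i).continuous.smul continuous_const)).norm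
    · exact continuous_norm
  have hsub : Set.range (fun a : ℕ →₀ ℝ => a.sum fun i c => c • e i) ⊆
      {x : X | ‖∑ i ∈ s, (b i x) • e i‖ ≤ ‖x‖} := by
    rintro _ ⟨a, rfl⟩
    simp only [Set.mem_setOf_eq, Finsupp.sum]
    set t := a.support with ht
    set x := ∑ j ∈ t, a j • e j with hx
    have hbx : ∀ i, b i x = a i := by
      intro i
      rw [hx, map_sum]
      have : ∀ j ∈ t, b i (a j • e j) = if i = j then a j else 0 := by
        intro j _
        rw [map_smul, hbio, smul_eq_mul]
        split <;> simp
      rw [Finset.sum_congr rfl this, Finset.sum_ite_eq]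
      split
      · rfl
      · next h => exact (Finsupp.notMem_support_iff.mp h).symm
    set ε : ℕ → ℝ := fun j => if j ∈ s then (1:ℝ) else -1 with hε
    set z := ∑ i ∈ t, (ε i * a i) • e i with hzdef
    have hz : ‖z‖ = ‖x‖ := huncond t a ε (fun n => by by_cases h : n ∈ s <;> simp [hε, h])
    have e1 : ∑ i ∈ s, (b i x) • e i = ∑ i ∈ s ∩ t, a i • e i := by
      simp only [hbx]
      refine (Finset.sum_subset (Finset.inter_subset_left) fun i hi hni => ?_).symm
      have : i ∉ t := fun hit => hni (Finset.mem_inter.mpr ⟨hi, hit⟩)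
      rw [Finsupp.notMem_support_iff.mp this, zero_smul]
    have e2 : (2:ℝ)⁻¹ • (x + z) = ∑ i ∈ s ∩ t, a i • e i := by
      rw [hx, hzdef, ← Finset.sum_add_distrib, Finset.smul_sum]
      have : ∀ i ∈ t, (2:ℝ)⁻¹ • (a i • e i + (ε i * a i) • e i)
          = (if i ∈ s then a i else 0) • e i := by
        intro i _
        rw [← add_smul, smul_smul]
        congr 1
        by_cases h : i ∈ s <;> simp [hε, h] <;> ring
      rw [Finset.sum_congr rfl this]
      simp only [ite_smul, zero_smul]
      rw [Finset.sum_ite_mem, Finset.inter_comm]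
    calc ‖∑ i ∈ s, (b i x) • e i‖ = ‖(2:ℝ)⁻¹ • (x + z)‖ := by rw [e1, e2]
      _ ≤ (2:ℝ)⁻¹ * (‖x‖ + ‖z‖) := by
          rw [norm_smul]
          gcongr
          · simp
          · exact norm_add_le _ _
      _ = ‖x‖ := by rw [hz]; ring
  have huniv : {x : X | ‖∑ i ∈ s, (b i x) • e i‖ ≤ ‖x‖} = Set.univ :=
    hcl.closure_eq ▸ (hdense.mono hsub).closure_eq
  exact Set.eq_univ_iff_forall.mp huniv x

private lemma st12_proj_dual
    (hbio : ∀ i j, b i (e j) = if i = j then 1 else 0)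
    (hdense : DenseRange fun a : ℕ →₀ ℝ => a.sum fun i c => c • e i)
    (huncond : ∀ (s : Finset ℕ) (a ε : ℕ → ℝ), (∀ n, ε n = 1 ∨ ε n = -1) →
      ‖∑ i ∈ s, (ε i * a i) • e i‖ = ‖∑ i ∈ s, a i • e i‖)
    (s : Finset ℕ) (f : X →L[ℝ] ℝ) : ‖∑ i ∈ s, f (e i) • b i‖ ≤ ‖f‖ := by
  refine ContinuousLinearMap.opNorm_le_bound _ (norm_nonneg f) fun x => ?_
  have hrw : (∑ i ∈ s, f (e i) • b i) x = f (∑ i ∈ s, (b i x) • e i) := by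
    rw [map_sum]
    rw [ContinuousLinearMap.sum_apply]
    refine Finset.sum_congr rfl fun i _ => ?_
    rw [ContinuousLinearMap.smul_apply, map_smul, smul_eq_mul, smul_eq_mul, mul_comm]
  rw [hrw]
  calc ‖f (∑ i ∈ s, (b i x) • e i)‖ ≤ ‖f‖ * ‖∑ i ∈ s, (b i x) • e i‖ := f.le_opNorm _
    _ ≤ ‖f‖ * ‖x‖ := by
        gcongr
        exact st12_proj_primal e b hbio hdense huncond s x

end st12aux

set_option maxHeartbeats 2000000 in
/-- if in the dual `X^*` of a reflexive space `X` with a 1-unconditional basis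
every normalized block basis of `(bⱼ) = (eⱼ^*)` satisfies the lower `ℓ_q` estimate with
constant `3^{-1/q}`, and some normalized block basis `(xsⱼ)` is `C`-equivalent to the unit
vector basis of `ℓ_q`, then the closed span of `(xsⱼ)` is complemented in `X^*` by a
projection of norm at most `3^{1/q} C`, and `X` contains an isomorphic copy of `ℓ_p`. -/
theorem stmt12 {X : Type*} [NormedAddCommGroup X] [NormedSpace ℝ X] [CompleteSpace X]
    (p q C : ℝ) (hp : 1 < p) (hpq : 1 / p + 1 / q = 1) (hC : 1 ≤ C)
    [Fact (1 ≤ ENNReal.ofReal p)]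
    (hrefl : Function.Surjective (NormedSpace.inclusionInDoubleDual ℝ X))
    (e : ℕ → X) (b : ℕ → X →L[ℝ] ℝ)
    (henorm : ∀ i, ‖e i‖ = 1)
    (hbio : ∀ i j, b i (e j) = if i = j then 1 else 0)
    (hdense : DenseRange fun a : ℕ →₀ ℝ => a.sum fun i c => c • e i)
    (huncond : ∀ (s : Finset ℕ) (a ε : ℕ → ℝ), (∀ n, ε n = 1 ∨ ε n = -1) →
      ‖∑ i ∈ s, (ε i * a i) • e i‖ = ‖∑ i ∈ s, a i • e i‖)
    (hlow : ∀ (zs : ℕ → X →L[ℝ] ℝ) (B : ℕ → Finset ℕ) (w : ℕ → ℝ),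
      (∀ j, zs j = ∑ i ∈ B j, w i • b i) → (∀ j, (B j).Nonempty) →
      (∀ j k : ℕ, j < k → ∀ s ∈ B j, ∀ t ∈ B k, s < t) → (∀ j, ‖zs j‖ = 1) →
      ∀ (n : ℕ) (a : Fin n → ℝ),
        (3 : ℝ) ^ (-(1 / q)) * (∑ j, |a j| ^ q) ^ (1 / q) ≤ ‖∑ j, a j • zs (j : ℕ)‖)
    (xs : ℕ → X →L[ℝ] ℝ) (A : ℕ → Finset ℕ) (co : ℕ → ℝ)
    (hxs : ∀ j, xs j = ∑ i ∈ A j, co i • b i)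
    (hAne : ∀ j, (A j).Nonempty)
    (hA : ∀ j k : ℕ, j < k → ∀ s ∈ A j, ∀ t ∈ A k, s < t)
    (hxn : ∀ j, ‖xs j‖ = 1)
    (hequiv : ∀ (n : ℕ) (a : Fin n → ℝ),
      C⁻¹ * (∑ j, |a j| ^ q) ^ (1 / q) ≤ ‖∑ j, a j • xs (j : ℕ)‖ ∧
      ‖∑ j, a j • xs (j : ℕ)‖ ≤ C * (∑ j, |a j| ^ q) ^ (1 / q)) :
    (∃ P : (X →L[ℝ] ℝ) →L[ℝ] (X →L[ℝ] ℝ),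
      P.comp P = P ∧ ‖P‖ ≤ (3 : ℝ) ^ (1 / q) * C ∧
      (∀ j, P (xs j) = xs j) ∧
      Set.range P ⊆ closure (Submodule.span ℝ (Set.range xs) : Set (X →L[ℝ] ℝ))) ∧
    ∃ T : lp (fun _ : ℕ => ℝ) (ENNReal.ofReal p) →L[ℝ] X, ∃ c > 0, ∀ f, c * ‖f‖ ≤ ‖T f‖ := by
  classical
  -- basic numeric facts
  have hp0 : (0:ℝ) < p := lt_trans one_pos hp
  have hp1 : (0:ℝ) < 1/p := by positivity
  have hp1' : 1/p < 1 := (div_lt_one hp0).mpr hp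
  have hq1p : (0:ℝ) < 1/q := by linarith
  have hq0 : (0:ℝ) < q := one_div_pos.mp hq1p
  have hq1 : 1 < q := (div_lt_one hq0).mp (by linarith)
  have hcj : Real.HolderConjugate p q := Real.holderConjugate_iff.mpr ⟨hp, by rw [← one_div, ← one_div]; exact hpq⟩
  have hC0 : (0:ℝ) < C := lt_of_lt_of_le one_pos hC
  have h3q : (0:ℝ) < (3:ℝ) ^ (1/q) := Real.rpow_pos_of_pos (by norm_num) _
  have hrwq : ∀ x : ℝ, 0 ≤ x → (x ^ (1/q)) ^ q = x := fun x hx => by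
    rw [← Real.rpow_mul hx, one_div, inv_mul_cancel₀ hq0.ne', Real.rpow_one]
  have hrwq' : ∀ x : ℝ, 0 ≤ x → (x ^ q) ^ (1/q) = x := fun x hx => by
    rw [← Real.rpow_mul hx, mul_one_div, div_self hq0.ne', Real.rpow_one]
  have hrwp' : ∀ x : ℝ, 0 ≤ x → (x ^ p) ^ (1/p) = x := fun x hx => by
    rw [← Real.rpow_mul hx, mul_one_div, div_self hp0.ne', Real.rpow_one]
  have h3qq : ((3:ℝ) ^ (1/q)) ^ q = 3 := hrwq 3 (by norm_num)
  -- uniqueness of blocks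
  have huniq : ∀ {i j k : ℕ}, i ∈ A j → i ∈ A k → j = k := by
    intro i j k hj hk
    by_contra hne
    rcases lt_or_gt_of_ne hne with h | h
    · exact lt_irrefl i (hA j k h i hj i hk)
    · exact lt_irrefl i (hA k j h i hk i hj)
  -- coordinate blocks of a functional
  set Q : (X →L[ℝ] ℝ) → ℕ → (X →L[ℝ] ℝ) := fun f j => ∑ i ∈ A j, f (e i) • b i with hQ
  -- key lower-q estimate consequence
  have key : ∀ (f : X →L[ℝ] ℝ) (n : ℕ),
      ∑ j ∈ Finset.range n, ‖Q f j‖ ^ q ≤ 3 * ‖f‖ ^ q := by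
    intro f n
    set d : ℕ → ℝ := fun j => ‖Q f j‖ with hd
    set w : ℕ → ℝ := fun i => if h : ∃ j, i ∈ A j then
        (if d h.choose = 0 then ‖b i‖⁻¹ else f (e i) / d h.choose) else 0 with hw
    set B : ℕ → Finset ℕ := fun j => if d j = 0 then {(A j).min' (hAne j)} else A j with hB
    have hBsub : ∀ j, B j ⊆ A j := by
      intro j
      simp only [hB]
      split
      · intro i hi
        rw [Finset.mem_singleton.mp hi]
        exact (A j).min'_mem (hAne j)
      · exact Finset.Subset.refl _
    have hwi : ∀ j, ∀ i ∈ A j, w i = if d j = 0 then ‖b i‖⁻¹ else f (e i) / d j := by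
      intro j i hi
      have hexj : ∃ k, i ∈ A k := ⟨j, hi⟩
      have hch : hexj.choose = j := huniq hexj.choose_spec hi
      rw [hw]
      simp only [dif_pos hexj, hch]
    have hbne : ∀ i, ‖b i‖ ≠ 0 := by
      intro i
      have h1 := (b i).le_opNorm (e i)
      rw [hbio i i, if_pos rfl, henorm, mul_one] at h1
      have : (0:ℝ) < ‖b i‖ := lt_of_lt_of_le (by norm_num : (0:ℝ) < ‖(1:ℝ)‖) h1
      exact this.ne'
    set zs : ℕ → (X →L[ℝ] ℝ) := fun j => ∑ i ∈ B j, w i • b i with hzs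
    have hzseq : ∀ j, d j ≠ 0 → zs j = (d j)⁻¹ • Q f j := by
      intro j hj
      rw [hzs]
      simp only [hB, if_neg hj]
      rw [hQ, Finset.smul_sum]
      refine Finset.sum_congr rfl fun i hi => ?_
      rw [hwi j i hi, if_neg hj, smul_smul, div_eq_inv_mul]
    have hzsnorm : ∀ j, ‖zs j‖ = 1 := by
      intro j
      by_cases hj : d j = 0
      · rw [hzs]
        simp only [hB, if_pos hj]
        rw [Finset.sum_singleton, hwi j _ ((A j).min'_mem (hAne j)), if_pos hj,
          norm_smul (‖b ((A j).min' (hAne j))‖⁻¹) (b ((A j).min' (hAne j))),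
          norm_inv, norm_norm, inv_mul_cancel₀ (hbne _)]
      · rw [hzseq j hj, norm_smul ((d j)⁻¹) (Q f j), norm_inv, Real.norm_eq_abs,
          abs_of_nonneg (norm_nonneg _)]
        exact inv_mul_cancel₀ hj
    have hdz : ∀ j, d j • zs j = Q f j := by
      intro j
      by_cases hj : d j = 0
      · have hQ0 : Q f j = 0 := norm_eq_zero.mp hj
        rw [hj, zero_smul, hQ0]
      · rw [hzseq j hj, smul_smul, mul_inv_cancel₀ hj, one_smul]
    have happ := hlow zs B w (fun j => rfl) (fun j => by
        simp only [hB]; split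
        · exact Finset.singleton_nonempty _
        · exact hAne j)
      (fun j k hjk s hs t ht => hA j k hjk s (hBsub j hs) t (hBsub k ht)) hzsnorm n
      (fun j => d j)
    have hsum1 : (∑ j : Fin n, |d (j:ℕ)| ^ q) = ∑ j ∈ Finset.range n, d j ^ q := by
      rw [← Fin.sum_univ_eq_sum_range (fun j => d j ^ q) n]
      exact Finset.sum_congr rfl fun j _ => by rw [abs_of_nonneg (norm_nonneg _)]
    have hsum2 : (∑ j : Fin n, d (j:ℕ) • zs (j:ℕ)) = ∑ j ∈ Finset.range n, Q f j := by
      rw [← Fin.sum_univ_eq_sum_range (fun j => Q f j) n]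
      exact Finset.sum_congr rfl fun j _ => hdz j
    rw [hsum1, hsum2] at happ
    have hdisjA : (↑(Finset.range n) : Set ℕ).PairwiseDisjoint A := by
      intro j _ k _ hjk
      refine Finset.disjoint_left.mpr fun i hij hik => hjk (huniq hij hik)
    have hbi : ∑ j ∈ Finset.range n, Q f j
        = ∑ i ∈ (Finset.range n).biUnion A, f (e i) • b i := by
      rw [Finset.sum_biUnion hdisjA]
    have hQn : ‖∑ j ∈ Finset.range n, Q f j‖ ≤ ‖f‖ := by
      rw [hbi]
      exact st12_proj_dual e b hbio hdense huncond _ f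
    set S := ∑ j ∈ Finset.range n, d j ^ q with hS
    have hS0 : 0 ≤ S := Finset.sum_nonneg fun j _ => Real.rpow_nonneg (norm_nonneg _) q
    have h1 : S ^ (1/q) ≤ 3 ^ (1/q) * ‖f‖ := by
      have h2 : (3:ℝ) ^ (-(1/q)) * S ^ (1/q) ≤ ‖f‖ := le_trans happ hQn
      calc S ^ (1/q) = 3 ^ (1/q) * ((3:ℝ) ^ (-(1/q)) * S ^ (1/q)) := by
            rw [← mul_assoc, ← Real.rpow_add (by norm_num : (0:ℝ) < 3), add_neg_cancel,
              Real.rpow_zero, one_mul]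
        _ ≤ 3 ^ (1/q) * ‖f‖ := mul_le_mul_of_nonneg_left h2 h3q.le
    calc S = (S ^ (1/q)) ^ q := (hrwq S hS0).symm
      _ ≤ (3 ^ (1/q) * ‖f‖) ^ q :=
          Real.rpow_le_rpow (Real.rpow_nonneg hS0 _) h1 hq0.le
      _ = 3 * ‖f‖ ^ q := by rw [Real.mul_rpow h3q.le (norm_nonneg f), h3qq]
  have keyS : ∀ (f : X →L[ℝ] ℝ) (s : Finset ℕ),
      ∑ j ∈ s, ‖Q f j‖ ^ q ≤ 3 * ‖f‖ ^ q := by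
    intro f s
    obtain ⟨n, hn⟩ := s.exists_nat_subset_range
    refine le_trans (Finset.sum_le_sum_of_subset_of_nonneg hn fun j _ _ =>
      Real.rpow_nonneg (norm_nonneg _) q) (key f n)
  have hxsek : ∀ j k, k ∈ A j → xs j (e k) = co k := by
    intro j k hk
    rw [hxs j, ContinuousLinearMap.sum_apply]
    have h1 : ∀ i ∈ A j, (co i • b i) (e k) = if i = k then co i else 0 := by
      intro i _
      rw [ContinuousLinearMap.smul_apply, hbio, smul_eq_mul]
      split <;> simp
    rw [Finset.sum_congr rfl h1, Finset.sum_ite_eq', if_pos hk]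
  -- norming vectors
  have hex : ∀ j, ∃ y : X, ∃ c : ℕ → ℝ, y = ∑ i ∈ A j, c i • e i ∧ ‖y‖ = 1 ∧ xs j y = 1 := by
    intro j
    set V : Submodule ℝ X := Submodule.span ℝ (↑((A j).image e) : Set X) with hV
    haveI : FiniteDimensional ℝ V :=
      FiniteDimensional.span_of_finite ℝ ((A j).image e).finite_toSet
    obtain ⟨i0, hi0⟩ := hAne j
    have he0 : e i0 ∈ V :=
      Submodule.subset_span (Finset.mem_coe.mpr (Finset.mem_image_of_mem e hi0))
    have hcomp : IsCompact (Metric.sphere (0:V) 1) := isCompact_sphere 0 1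
    have hsne : (Metric.sphere (0:V) 1).Nonempty := by
      refine ⟨⟨e i0, he0⟩, mem_sphere_zero_iff_norm.mpr ?_⟩
      rw [Submodule.coe_norm]
      exact henorm i0
    have hcont : Continuous fun v : V => xs j (v : X) :=
      (xs j).continuous.comp continuous_subtype_val
    obtain ⟨v0, hv0mem, hv0max⟩ := hcomp.exists_isMaxOn hsne hcont.continuousOn
    have hv0n : ‖(v0 : X)‖ = 1 := by
      rw [← Submodule.coe_norm]
      exact mem_sphere_zero_iff_norm.mp hv0mem
    set M := xs j (v0 : X) with hM
    have hsphere_mem : ∀ (x : X) (hx : x ∈ V), ‖x‖ = 1 → xs j x ≤ M := by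
      intro x hx h1
      exact hv0max (mem_sphere_zero_iff_norm.mpr (by rw [Submodule.coe_norm]; exact h1) :
        (⟨x, hx⟩ : V) ∈ Metric.sphere (0:V) 1)
    have hM1 : M ≤ 1 := by
      have h1 := (xs j).le_opNorm (v0 : X)
      rw [hxn j, one_mul, hv0n] at h1
      exact le_trans (le_abs_self M) (by rwa [Real.norm_eq_abs] at h1)
    have hM0 : 0 ≤ M := by
      have h1 : xs j (e i0) ≤ M := hsphere_mem _ he0 (henorm i0)
      have h2 : xs j (-(e i0)) ≤ M :=
        hsphere_mem _ (neg_mem he0) (by rw [norm_neg]; exact henorm i0)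
      rw [map_neg] at h2
      linarith
    have hproj : ∀ x : X, (∑ i ∈ A j, (b i x) • e i) ∈ V := by
      intro x
      exact Submodule.sum_mem _ fun i hi => Submodule.smul_mem _ _
        (Submodule.subset_span (Finset.mem_coe.mpr (Finset.mem_image_of_mem e hi)))
    have hxsproj : ∀ x : X, xs j (∑ i ∈ A j, (b i x) • e i) = xs j x := by
      intro x
      rw [map_sum]
      have h1 : ∀ i ∈ A j, xs j ((b i x) • e i) = co i * b i x := by
        intro i hi
        rw [map_smul, smul_eq_mul, hxsek j i hi, mul_comm]
      rw [Finset.sum_congr rfl h1, hxs j, ContinuousLinearMap.sum_apply]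
      exact Finset.sum_congr rfl fun i _ => by rw [ContinuousLinearMap.smul_apply, smul_eq_mul]
    have hMge : 1 ≤ M := by
      by_contra hlt
      push_neg at hlt
      have h2 : M < ‖xs j‖ := by rw [hxn j]; exact hlt
      obtain ⟨x, hx1, hx2⟩ := (xs j).exists_lt_apply_of_lt_opNorm h2
      set u := ∑ i ∈ A j, (b i x) • e i with hu
      have hun : ‖u‖ ≤ ‖x‖ := st12_proj_primal e b hbio hdense huncond (A j) x
      have hxu : xs j u = xs j x := hxsproj x
      have hxne : xs j x ≠ 0 := by
        intro h0
        rw [h0] at hx2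
        simp only [norm_zero] at hx2
        exact absurd hx2 (not_lt.mpr hM0)
      have hune : u ≠ 0 := by
        intro h0
        rw [h0, map_zero] at hxu
        exact hxne hxu.symm
      have hupos : 0 < ‖u‖ := norm_pos_iff.mpr hune
      set t := xs j x with htdef
      set v : X := (Real.sign t * ‖u‖⁻¹) • u with hv
      have hsgn1 : |Real.sign t| = 1 := by
        rcases lt_or_gt_of_ne hxne with h|h
        · rw [Real.sign_of_neg h]; norm_num
        · rw [Real.sign_of_pos h]; norm_num
      have hvV : v ∈ V := Submodule.smul_mem _ _ (hproj x)
      have hvn : ‖v‖ = 1 := by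
        rw [hv, norm_smul (Real.sign t * ‖u‖⁻¹) u, Real.norm_eq_abs, abs_mul, hsgn1, one_mul,
          abs_of_nonneg (inv_nonneg.mpr (norm_nonneg u)), inv_mul_cancel₀ hupos.ne']
      have hsgnt : Real.sign t * t = |t| := by
        rcases lt_or_gt_of_ne hxne with h|h
        · rw [Real.sign_of_neg h, abs_of_neg h]; ring
        · rw [Real.sign_of_pos h, abs_of_pos h]; ring
      have hvval : xs j v = |t| * ‖u‖⁻¹ := by
        rw [hv, map_smul, smul_eq_mul, hxu, mul_right_comm, hsgnt]
      have hgt : M < xs j v := by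
        rw [hvval]
        have h3 : M < |t| := by rwa [Real.norm_eq_abs] at hx2
        have h5 : ‖u‖ ≤ 1 := le_trans hun hx1.le
        have h4 : (1:ℝ) ≤ ‖u‖⁻¹ := (one_le_inv₀ hupos).mpr h5
        calc M < |t| := h3
          _ = |t| * 1 := (mul_one _).symm
          _ ≤ |t| * ‖u‖⁻¹ := mul_le_mul_of_nonneg_left h4 (abs_nonneg t)
      exact absurd (hsphere_mem v hvV hvn) (not_le.mpr hgt)
    have hMeq : M = 1 := le_antisymm hM1 hMge
    obtain ⟨g, -, hg⟩ := Submodule.mem_span_finset.mp v0.2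
    have heinj : ∀ i1 ∈ A j, ∀ i2 ∈ A j, e i1 = e i2 → i1 = i2 := by
      intro i1 _ i2 _ h12
      have h := hbio i1 i2
      rw [← h12, hbio i1 i1, if_pos rfl] at h
      by_contra hne
      rw [if_neg hne] at h
      norm_num at h
    refine ⟨(v0 : X), fun i => g (e i), ?_, hv0n, by rw [← hM, hMeq]⟩
    rw [← hg, Finset.sum_image heinj]
  choose y c hyrep hynorm hyone using hex
  have hbyj : ∀ j i, b i (y j) = if i ∈ A j then c j i else 0 := by
    intro j i
    rw [hyrep j, map_sum]
    have h1 : ∀ l ∈ A j, b i (c j l • e l) = if i = l then c j l else 0 := by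
      intro l _
      rw [map_smul, hbio, smul_eq_mul]
      split <;> simp
    rw [Finset.sum_congr rfl h1, Finset.sum_ite_eq]
  have hdelta : ∀ j k, xs k (y j) = if k = j then 1 else 0 := by
    intro j k
    by_cases hkj : k = j
    · rw [if_pos hkj, hkj]
      exact hyone j
    · rw [if_neg hkj, hxs k, ContinuousLinearMap.sum_apply]
      refine Finset.sum_eq_zero fun i hi => ?_
      rw [ContinuousLinearMap.smul_apply, hbyj, smul_eq_mul]
      have : i ∉ A j := fun hij => hkj (huniq hi hij)
      rw [if_neg this, mul_zero]
  have hfy : ∀ (f : X →L[ℝ] ℝ) j, |f (y j)| ≤ ‖Q f j‖ := by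
    intro f j
    have h1 : Q f j (y j) = f (y j) := by
      rw [hQ]
      simp only []
      rw [ContinuousLinearMap.sum_apply]
      have h2 : ∀ i ∈ A j, (f (e i) • b i) (y j) = f (e i) * (if i ∈ A j then c j i else 0) := by
        intro i _
        rw [ContinuousLinearMap.smul_apply, smul_eq_mul, hbyj]
      rw [Finset.sum_congr rfl h2]
      conv_rhs => rw [hyrep j, map_sum]
      refine Finset.sum_congr rfl fun i hi => ?_
      rw [if_pos hi, map_smul, smul_eq_mul, mul_comm]
    calc |f (y j)| = ‖Q f j (y j)‖ := by rw [h1, Real.norm_eq_abs]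
      _ ≤ ‖Q f j‖ * ‖y j‖ := (Q f j).le_opNorm _
      _ = ‖Q f j‖ := by rw [hynorm j, mul_one]
  
  -- q-sum of coefficients f(y j)
  have hsumq : ∀ (f : X →L[ℝ] ℝ) (s : Finset ℕ), ∑ j ∈ s, |f (y j)| ^ q ≤ 3 * ‖f‖ ^ q := by
    intro f s
    refine le_trans (Finset.sum_le_sum fun j _ => ?_) (keyS f s)
    exact Real.rpow_le_rpow (abs_nonneg _) (hfy f j) hq0.le
  -- upper estimate for finite blocks of xs
  have hKB : ∀ (g : ℕ → ℝ) (s : Finset ℕ),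
      ‖∑ j ∈ s, g j • xs j‖ ≤ C * (∑ j ∈ s, |g j| ^ q) ^ (1/q) := by
    intro g s
    obtain ⟨n, hn⟩ := s.exists_nat_subset_range
    have h1 := (hequiv n (fun j => if (j:ℕ) ∈ s then g j else 0)).2
    have e1 : (∑ j : Fin n, (if (j:ℕ) ∈ s then g (j:ℕ) else 0) • xs (j:ℕ))
        = ∑ j ∈ s, g j • xs j := by
      rw [Fin.sum_univ_eq_sum_range (fun i => (if i ∈ s then g i else 0) • xs i) n]
      simp only [ite_smul, zero_smul]
      rw [Finset.sum_ite_mem, Finset.inter_eq_right.mpr hn]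
    have e2 : (∑ j : Fin n, |if (j:ℕ) ∈ s then g (j:ℕ) else 0| ^ q)
        = ∑ j ∈ s, |g j| ^ q := by
      rw [Fin.sum_univ_eq_sum_range (fun i => |if i ∈ s then g i else 0| ^ q) n]
      have h3 : ∀ i ∈ Finset.range n, |if i ∈ s then g i else 0| ^ q
          = if i ∈ s then |g i| ^ q else 0 := by
        intro i _
        split
        · rfl
        · rw [abs_zero, Real.zero_rpow hq0.ne']
      rw [Finset.sum_congr rfl h3, Finset.sum_ite_mem, Finset.inter_eq_right.mpr hn]
    rw [e1, e2] at h1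
    exact h1
  -- summability of the projection series
  have hsummP : ∀ f : X →L[ℝ] ℝ, Summable (fun j => f (y j) • xs j) := by
    intro f
    rw [summable_iff_vanishing_norm]
    intro ε hε
    have hr : Summable (fun j => |f (y j)| ^ q) :=
      summable_of_sum_le (fun j => Real.rpow_nonneg (abs_nonneg _) q) (fun u => hsumq f u)
    have hδ : (0:ℝ) < (ε / C) ^ q := Real.rpow_pos_of_pos (div_pos hε hC0) q
    obtain ⟨s, hs⟩ := summable_iff_vanishing_norm.mp hr ((ε / C) ^ q) hδ
    refine ⟨s, fun t ht => ?_⟩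
    have h1 : ∑ j ∈ t, |f (y j)| ^ q < (ε / C) ^ q := by
      have h2 := hs t ht
      rw [Real.norm_eq_abs] at h2
      exact lt_of_le_of_lt (le_abs_self _) h2
    calc ‖∑ j ∈ t, f (y j) • xs j‖ ≤ C * (∑ j ∈ t, |f (y j)| ^ q) ^ (1/q) := hKB _ t
      _ < C * ((ε / C) ^ q) ^ (1/q) := by
          refine mul_lt_mul_of_pos_left ?_ hC0
          exact Real.rpow_lt_rpow (Finset.sum_nonneg fun j _ =>
            Real.rpow_nonneg (abs_nonneg _) q) h1 hq1p
      _ = ε := by rw [hrwq' _ (div_nonneg hε.le hC0.le), mul_comm, div_mul_cancel₀ _ hC0.ne']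
  have hPbound : ∀ (f : X →L[ℝ] ℝ) (s : Finset ℕ),
      ‖∑ j ∈ s, f (y j) • xs j‖ ≤ 3 ^ (1/q) * C * ‖f‖ := by
    intro f s
    calc ‖∑ j ∈ s, f (y j) • xs j‖ ≤ C * (∑ j ∈ s, |f (y j)| ^ q) ^ (1/q) := hKB _ s
      _ ≤ C * (3 * ‖f‖ ^ q) ^ (1/q) := by
          refine mul_le_mul_of_nonneg_left ?_ hC0.le
          exact Real.rpow_le_rpow (Finset.sum_nonneg fun j _ =>
            Real.rpow_nonneg (abs_nonneg _) q) (hsumq f s) hq1p.le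
      _ = 3 ^ (1/q) * C * ‖f‖ := by
          rw [Real.mul_rpow (by norm_num) (Real.rpow_nonneg (norm_nonneg f) q),
            hrwq' _ (norm_nonneg f)]
          ring
  -- the projection
  set Pl : (X →L[ℝ] ℝ) →ₗ[ℝ] (X →L[ℝ] ℝ) :=
    { toFun := fun f => ∑' j, f (y j) • xs j
      map_add' := by
        intro f g
        rw [← Summable.tsum_add (hsummP f) (hsummP g)]
        exact tsum_congr fun j => by rw [ContinuousLinearMap.add_apply, add_smul]
      map_smul' := by
        intro m f
        rw [RingHom.id_apply, ← Summable.tsum_const_smul m (hsummP f)]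
        exact tsum_congr fun j => by
          rw [ContinuousLinearMap.smul_apply, smul_eq_mul, ← smul_smul]
    } with hPldef
  have hPlapp : ∀ f, Pl f = ∑' j, f (y j) • xs j := fun f => rfl
  have hPlb : ∀ f, ‖Pl f‖ ≤ 3 ^ (1/q) * C * ‖f‖ := fun f =>
    st12_norm_hasSum_le (hsummP f).hasSum (fun s => hPbound f s)
  set P := Pl.mkContinuous (3 ^ (1/q) * C) hPlb with hPdef
  have hPapp : ∀ f, P f = ∑' j, f (y j) • xs j := fun f => rfl
  have hPxs : ∀ k, P (xs k) = xs k := by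
    intro k
    rw [hPapp]
    rw [tsum_eq_single k (fun j hj => by
      rw [hdelta j k, if_neg (fun h => hj h.symm), zero_smul])]
    rw [hdelta k k, if_pos rfl, one_smul]
  have hPP : P.comp P = P := by
    refine ContinuousLinearMap.ext fun f => ?_
    rw [ContinuousLinearMap.comp_apply]
    calc P (P f) = P (∑' j, f (y j) • xs j) := by rw [hPapp f]
      _ = ∑' j, P (f (y j) • xs j) := ContinuousLinearMap.map_tsum P (hsummP f)
      _ = ∑' j, f (y j) • xs j := tsum_congr fun j => by rw [map_smul, hPxs j]
      _ = P f := (hPapp f).symm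
  have hPnorm : ‖P‖ ≤ 3 ^ (1/q) * C := Pl.mkContinuous_norm_le (by positivity) hPlb
  have hPrange : Set.range P ⊆ closure (Submodule.span ℝ (Set.range xs) : Set (X →L[ℝ] ℝ)) := by
    rintro _ ⟨f, rfl⟩
    have hhs := (hsummP f).hasSum
    rw [hPapp]
    refine mem_closure_of_tendsto hhs (Filter.Eventually.of_forall fun s => ?_)
    exact Submodule.sum_mem _ fun j _ => Submodule.smul_mem _ _
      (Submodule.subset_span (Set.mem_range_self j))
  refine ⟨⟨P, hPP, hPnorm, hPxs, hPrange⟩, ?_⟩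
  -- second part : copy of ℓ_p
  have hpt : (ENNReal.ofReal p).toReal = p := ENNReal.toReal_ofReal hp0.le
  have hptR : 0 < (ENNReal.ofReal p).toReal := by rw [hpt]; exact hp0
  have hpne : (ENNReal.ofReal p) ≠ ⊤ := ENNReal.ofReal_ne_top
  have hUB : ∀ (a : ℕ → ℝ) (s : Finset ℕ),
      ‖∑ j ∈ s, a j • y j‖ ≤ 3 ^ (1/q) * (∑ j ∈ s, |a j| ^ p) ^ (1/p) := by
    intro a s
    have hM0 : (0:ℝ) ≤ 3 ^ (1/q) * (∑ j ∈ s, |a j| ^ p) ^ (1/p) := by positivity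
    refine NormedSpace.norm_le_dual_bound ℝ _ hM0 fun f => ?_
    rw [Real.norm_eq_abs, map_sum]
    have h1 : ∀ j ∈ s, f (a j • y j) = a j * f (y j) := fun j _ => by
      rw [map_smul, smul_eq_mul]
    rw [Finset.sum_congr rfl h1]
    calc |∑ j ∈ s, a j * f (y j)| ≤ ∑ j ∈ s, |a j * f (y j)| := Finset.abs_sum_le_sum_abs _ _
      _ = ∑ j ∈ s, |a j| * |f (y j)| := Finset.sum_congr rfl fun j _ => abs_mul _ _
      _ ≤ ∑ j ∈ s, |a j| * ‖Q f j‖ := Finset.sum_le_sum fun j _ =>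
          mul_le_mul_of_nonneg_left (hfy f j) (abs_nonneg _)
      _ ≤ (∑ j ∈ s, |a j| ^ p) ^ (1/p) * (∑ j ∈ s, ‖Q f j‖ ^ q) ^ (1/q) :=
          Real.inner_le_Lp_mul_Lq_of_nonneg s hcj (fun j _ => abs_nonneg _)
            (fun j _ => norm_nonneg _)
      _ ≤ (∑ j ∈ s, |a j| ^ p) ^ (1/p) * (3 * ‖f‖ ^ q) ^ (1/q) := by
          refine mul_le_mul_of_nonneg_left ?_ (Real.rpow_nonneg (Finset.sum_nonneg fun j _ =>
            Real.rpow_nonneg (abs_nonneg _) p) _)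
          exact Real.rpow_le_rpow (Finset.sum_nonneg fun j _ =>
            Real.rpow_nonneg (norm_nonneg _) q) (keyS f s) hq1p.le
      _ = 3 ^ (1/q) * (∑ j ∈ s, |a j| ^ p) ^ (1/p) * ‖f‖ := by
          rw [Real.mul_rpow (by norm_num) (Real.rpow_nonneg (norm_nonneg f) q),
            hrwq' _ (norm_nonneg f)]
          ring
  have hpq2 : (p - 1) * q = p := by
    rw [hcj.conjugate_eq]
    field_simp
    exact div_self hcj.sub_one_ne_zero
  have habs_c : ∀ t : ℝ, |Real.sign t * |t| ^ (p-1)| = |t| ^ (p-1) := by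
    intro t
    rcases eq_or_ne t 0 with rfl | h
    · simp [Real.sign_zero, Real.zero_rpow (sub_ne_zero.mpr hp.ne')]
    · have h1 : |Real.sign t| = 1 := by
        rcases lt_or_gt_of_ne h with h2|h2
        · rw [Real.sign_of_neg h2]; norm_num
        · rw [Real.sign_of_pos h2]; norm_num
      rw [abs_mul, h1, one_mul, abs_of_nonneg (Real.rpow_nonneg (abs_nonneg t) _)]
  have hsgnt' : ∀ t : ℝ, Real.sign t * |t| ^ (p-1) * t = |t| ^ p := by
    intro t
    rcases eq_or_ne t 0 with rfl | h
    · simp [Real.zero_rpow hp0.ne']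
    · have h2 : Real.sign t * t = |t| := by
        rcases lt_or_gt_of_ne h with h3|h3
        · rw [Real.sign_of_neg h3, abs_of_neg h3]; ring
        · rw [Real.sign_of_pos h3, abs_of_pos h3]; ring
      have h4 : |t| ^ ((1:ℝ) + (p-1)) = |t| ^ (1:ℝ) * |t| ^ (p-1) :=
        Real.rpow_add (abs_pos.mpr h) _ _
      rw [Real.rpow_one] at h4
      have h5 : (1:ℝ) + (p-1) = p := by ring
      rw [h5] at h4
      rw [mul_right_comm, h2]
      exact h4.symm
  have hLB : ∀ (a : ℕ → ℝ) (s : Finset ℕ),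
      C⁻¹ * (∑ j ∈ s, |a j| ^ p) ^ (1/p) ≤ ‖∑ j ∈ s, a j • y j‖ := by
    intro a s
    set S := ∑ j ∈ s, |a j| ^ p with hSdef
    have hS0 : (0:ℝ) ≤ S := Finset.sum_nonneg fun j _ => Real.rpow_nonneg (abs_nonneg _) p
    rcases eq_or_lt_of_le hS0 with hS' | hSpos
    · rw [← hS', Real.zero_rpow (one_div_ne_zero hp0.ne'), mul_zero]
      exact norm_nonneg _
    · set v := ∑ j ∈ s, a j • y j with hvdef
      set cf : ℕ → ℝ := fun j => Real.sign (a j) * |a j| ^ (p-1) with hcf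
      set g : X →L[ℝ] ℝ := ∑ j ∈ s, cf j • xs j with hgdef
      have hxsv : ∀ j ∈ s, xs j v = a j := by
        intro j hj
        rw [hvdef, map_sum]
        have h1 : ∀ k ∈ s, xs j (a k • y k) = if j = k then a k else 0 := by
          intro k _
          rw [map_smul, smul_eq_mul, hdelta k j]
          split <;> simp
        rw [Finset.sum_congr rfl h1, Finset.sum_ite_eq, if_pos hj]
      have hgv : g v = S := by
        rw [hgdef, ContinuousLinearMap.sum_apply]
        have h1 : ∀ j ∈ s, (cf j • xs j) v = |a j| ^ p := by
          intro j hj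
          rw [ContinuousLinearMap.smul_apply, smul_eq_mul, hxsv j hj, hcf]
          exact hsgnt' (a j)
        rw [Finset.sum_congr rfl h1]
      have hgn : ‖g‖ ≤ C * S ^ (1/q) := by
        have h1 := hKB cf s
        have h2 : ∑ j ∈ s, |cf j| ^ q = S := by
          rw [hSdef]
          refine Finset.sum_congr rfl fun j _ => ?_
          rw [hcf]
          simp only []
          rw [habs_c (a j), ← Real.rpow_mul (abs_nonneg (a j)), hpq2]
        rw [h2] at h1
        exact h1
      have h1 : S ≤ C * S ^ (1/q) * ‖v‖ := by
        calc S = g v := hgv.symm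
          _ ≤ |g v| := le_abs_self _
          _ ≤ ‖g‖ * ‖v‖ := by rw [← Real.norm_eq_abs]; exact g.le_opNorm v
          _ ≤ C * S ^ (1/q) * ‖v‖ := mul_le_mul_of_nonneg_right hgn (norm_nonneg _)
      have hSq : (0:ℝ) < S ^ (1/q) := Real.rpow_pos_of_pos hSpos _
      rw [inv_mul_le_iff₀ hC0]
      have hSsplit : S ^ (1/p) * S ^ (1/q) = S := by
        rw [← Real.rpow_add hSpos, hpq, Real.rpow_one]
      have h2 : S ^ (1/p) * S ^ (1/q) ≤ (C * ‖v‖) * S ^ (1/q) := by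
        rw [hSsplit]
        calc S ≤ C * S ^ (1/q) * ‖v‖ := h1
          _ = (C * ‖v‖) * S ^ (1/q) := by ring
      exact le_of_mul_le_mul_right h2 hSq
  have hTsum : ∀ f : lp (fun _ : ℕ => ℝ) (ENNReal.ofReal p), Summable (fun j => f j • y j) := by
    intro f
    rw [summable_iff_vanishing_norm]
    intro ε hε
    have hsf : Summable (fun j => |f j| ^ p) := by
      have h1 := (lp.memℓp f).summable hptR
      simp only [Real.norm_eq_abs, hpt] at h1
      exact h1
    have hδ : (0:ℝ) < (ε / 3 ^ (1/q)) ^ p := Real.rpow_pos_of_pos (div_pos hε h3q) p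
    obtain ⟨s, hs⟩ := summable_iff_vanishing_norm.mp hsf _ hδ
    refine ⟨s, fun t ht => ?_⟩
    have h1 : ∑ j ∈ t, |f j| ^ p < (ε / 3 ^ (1/q)) ^ p := by
      have h2 := hs t ht
      rw [Real.norm_eq_abs] at h2
      exact lt_of_le_of_lt (le_abs_self _) h2
    calc ‖∑ j ∈ t, f j • y j‖ ≤ 3 ^ (1/q) * (∑ j ∈ t, |f j| ^ p) ^ (1/p) := hUB _ t
      _ < 3 ^ (1/q) * ((ε / 3 ^ (1/q)) ^ p) ^ (1/p) := by
          refine mul_lt_mul_of_pos_left ?_ h3q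
          exact Real.rpow_lt_rpow (Finset.sum_nonneg fun j _ =>
            Real.rpow_nonneg (abs_nonneg _) p) h1 hp1
      _ = ε := by rw [hrwp' _ (div_nonneg hε.le h3q.le), mul_comm, div_mul_cancel₀ _ h3q.ne']
  have hTfin : ∀ f : lp (fun _ : ℕ => ℝ) (ENNReal.ofReal p), ∀ s : Finset ℕ,
      (∑ j ∈ s, |f j| ^ p) ^ (1/p) ≤ ‖f‖ := by
    intro f s
    have hsf : Summable (fun j => |f j| ^ p) := by
      have h1 := (lp.memℓp f).summable hptR
      simp only [Real.norm_eq_abs, hpt] at h1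
      exact h1
    have h1 : ∑ j ∈ s, |f j| ^ p ≤ ∑' j, |f j| ^ p :=
      Summable.sum_le_tsum s (fun j _ => Real.rpow_nonneg (abs_nonneg _) p) hsf
    have h2 : ‖f‖ = (∑' j, |f j| ^ p) ^ (1/p) := by
      rw [lp.norm_eq_tsum_rpow hptR f]
      simp only [Real.norm_eq_abs, hpt]
    rw [h2]
    exact Real.rpow_le_rpow (Finset.sum_nonneg fun j _ =>
      Real.rpow_nonneg (abs_nonneg _) p) h1 hp1.le
  set Tl : lp (fun _ : ℕ => ℝ) (ENNReal.ofReal p) →ₗ[ℝ] X :=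
    { toFun := fun f => ∑' j, f j • y j
      map_add' := by
        intro f g
        rw [← Summable.tsum_add (hTsum f) (hTsum g)]
        exact tsum_congr fun j => by rw [lp.coeFn_add, Pi.add_apply, add_smul]
      map_smul' := by
        intro m f
        rw [RingHom.id_apply, ← Summable.tsum_const_smul m (hTsum f)]
        exact tsum_congr fun j => by
          rw [lp.coeFn_smul, Pi.smul_apply, smul_eq_mul, ← smul_smul]
    } with hTldef
  have hTlb : ∀ f, ‖Tl f‖ ≤ 3 ^ (1/q) * ‖f‖ := by
    intro f
    refine st12_norm_hasSum_le (hTsum f).hasSum fun s => ?_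
    calc ‖∑ j ∈ s, f j • y j‖ ≤ 3 ^ (1/q) * (∑ j ∈ s, |f j| ^ p) ^ (1/p) := hUB _ s
      _ ≤ 3 ^ (1/q) * ‖f‖ := mul_le_mul_of_nonneg_left (hTfin f s) h3q.le
  set T := Tl.mkContinuous (3 ^ (1/q)) hTlb with hTdef
  refine ⟨T, C⁻¹, inv_pos.mpr hC0, fun f => ?_⟩
  have hsingle : HasSum (fun i => lp.single (ENNReal.ofReal p) i (f i)) f :=
    lp.hasSum_single hpne f
  have hTsingle : ∀ (i : ℕ) (aa : ℝ), T (lp.single (ENNReal.ofReal p) i aa) = aa • y i := by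
    intro i aa
    have h0 : T (lp.single (ENNReal.ofReal p) i aa)
        = ∑' j, (lp.single (ENNReal.ofReal p) i aa :
            lp (fun _ : ℕ => ℝ) (ENNReal.ofReal p)) j • y j := rfl
    rw [h0, tsum_eq_single i (fun j hj => by
      rw [lp.single_apply_ne _ i _ hj, zero_smul])]
    rw [lp.single_apply_self]
  have hTpart : ∀ s : Finset ℕ,
      T (∑ i ∈ s, lp.single (ENNReal.ofReal p) i (f i)) = ∑ j ∈ s, f j • y j := by
    intro s
    rw [map_sum]
    exact Finset.sum_congr rfl fun i _ => hTsingle i (f i)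
  have hnormpart : ∀ s : Finset ℕ,
      ‖∑ i ∈ s, lp.single (ENNReal.ofReal p) i (f i)‖ = (∑ j ∈ s, |f j| ^ p) ^ (1/p) := by
    intro s
    have h1 := lp.norm_sum_single hptR (fun i => f i) s
    rw [hpt] at h1
    have h2 : ‖∑ i ∈ s, lp.single (ENNReal.ofReal p) i (f i)‖
        = (‖∑ i ∈ s, lp.single (ENNReal.ofReal p) i (f i)‖ ^ p) ^ (1/p) :=
      (hrwp' _ (norm_nonneg _)).symm
    rw [h2, h1]
    simp only [Real.norm_eq_abs]
  have hlim1 : Filter.Tendsto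
      (fun s : Finset ℕ => C⁻¹ * ‖∑ i ∈ s, lp.single (ENNReal.ofReal p) i (f i)‖)
      Filter.atTop (nhds (C⁻¹ * ‖f‖)) :=
    Filter.Tendsto.const_mul _ ((continuous_norm.tendsto f).comp hsingle)
  have hlim2 : Filter.Tendsto
      (fun s : Finset ℕ => ‖T (∑ i ∈ s, lp.single (ENNReal.ofReal p) i (f i))‖)
      Filter.atTop (nhds ‖T f‖) :=
    (continuous_norm.tendsto _).comp ((T.continuous.tendsto f).comp hsingle)
  refine le_of_tendsto_of_tendsto' hlim1 hlim2 fun s => ?_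
  rw [hTpart s, hnormpart s]
  exact hLB (fun j => f j) s
end
end

section
/- Let X* have a subsymmetric normalized block basic sequence (xⱼ*) of the dual basis (eⱼ*) such that ‖xⱼ*‖_∞ ≥ c > 0 for all j, where (eⱼ*) 1-dominates all its normalized block bases and (eⱼ*) is 1-unconditional. Then (xⱼ*) is equivalent to (eⱼ*): for all scalars, c‖∑aⱼeⱼ*‖ ≤ ‖∑aⱼxⱼ*‖ ≤ ‖∑aⱼeⱼ*‖. -/
open Finset

noncomputable section

section aux
variable {V : Type*} [NormedAddCommGroup V] [NormedSpace ℝ V] (b : ℕ → V)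

lemma aux_subsum
    (huncond : ∀ (s : Finset ℕ) (a ε : ℕ → ℝ), (∀ n, ε n = 1 ∨ ε n = -1) →
      ‖∑ i ∈ s, (ε i * a i) • b i‖ = ‖∑ i ∈ s, a i • b i‖)
    {S T : Finset ℕ} (hT : T ⊆ S) (f : ℕ → ℝ) :
    ‖∑ i ∈ T, f i • b i‖ ≤ ‖∑ i ∈ S, f i • b i‖ := by
  set ε : ℕ → ℝ := fun i => if i ∈ T then 1 else -1 with hε
  have hεpm : ∀ n, ε n = 1 ∨ ε n = -1 := by
    intro n; by_cases h : n ∈ T <;> simp [hε, h]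
  have key : (2:ℝ) • (∑ i ∈ T, f i • b i)
      = ∑ i ∈ S, f i • b i + ∑ i ∈ S, (ε i * f i) • b i := by
    rw [← Finset.sum_add_distrib, Finset.smul_sum]
    have e1 : ∑ i ∈ S, (f i • b i + (ε i * f i) • b i)
        = ∑ i ∈ S, (if i ∈ T then (2:ℝ) • (f i • b i) else 0) := by
      apply Finset.sum_congr rfl
      intro i hi
      by_cases h : i ∈ T
      · have hh : ε i = 1 := by simp [hε, h]
        rw [hh, if_pos h]; module
      · have hh : ε i = -1 := by simp [hε, h]
        rw [hh, if_neg h]; module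
    rw [e1, Finset.sum_ite_mem, Finset.inter_eq_right.mpr hT]
  have hx' := huncond S f ε hεpm
  have h2 : (2:ℝ) * ‖∑ i ∈ T, f i • b i‖ ≤ 2 * ‖∑ i ∈ S, f i • b i‖ := by
    calc (2:ℝ) * ‖∑ i ∈ T, f i • b i‖ = ‖(2:ℝ) • (∑ i ∈ T, f i • b i)‖ := by
          rw [norm_smul]; simp
      _ = ‖∑ i ∈ S, f i • b i + ∑ i ∈ S, (ε i * f i) • b i‖ := by rw [key]
      _ ≤ ‖∑ i ∈ S, f i • b i‖ + ‖∑ i ∈ S, (ε i * f i) • b i‖ := norm_add_le _ _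
      _ = 2 * ‖∑ i ∈ S, f i • b i‖ := by rw [hx']; ring
  linarith

lemma aux_single
    (huncond : ∀ (s : Finset ℕ) (a ε : ℕ → ℝ), (∀ n, ε n = 1 ∨ ε n = -1) →
      ‖∑ i ∈ s, (ε i * a i) • b i‖ = ‖∑ i ∈ s, a i • b i‖)
    {S : Finset ℕ} (j : ℕ) (t : ℝ) (ht : |t| ≤ 1) (f : ℕ → ℝ) :
    ‖∑ i ∈ S, (if i = j then t * f i else f i) • b i‖ ≤ ‖∑ i ∈ S, f i • b i‖ := by
  set ε : ℕ → ℝ := fun i => if i = j then -1 else 1 with hε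
  have hεpm : ∀ n, ε n = 1 ∨ ε n = -1 := by
    intro n; by_cases h : n = j <;> simp [hε, h]
  rw [abs_le] at ht
  set lam : ℝ := (1 + t)/2 with hlam
  have h0 : 0 ≤ lam := by rw [hlam]; linarith
  have h1 : lam ≤ 1 := by rw [hlam]; linarith
  have key : ∑ i ∈ S, (if i = j then t * f i else f i) • b i
      = lam • (∑ i ∈ S, f i • b i) + (1 - lam) • (∑ i ∈ S, (ε i * f i) • b i) := by
    rw [Finset.smul_sum, Finset.smul_sum, ← Finset.sum_add_distrib]
    apply Finset.sum_congr rfl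
    intro i hi
    by_cases h : i = j
    · have hεi : ε i = -1 := by simp [hε, h]
      rw [if_pos h, hεi]
      have : t * f i = lam * f i + (1 - lam) * (-1 * f i) := by rw [hlam]; ring
      rw [smul_smul, smul_smul, ← add_smul, ← this]
    · have hεi : ε i = 1 := by simp [hε, h]
      rw [if_neg h, hεi]
      have : f i = lam * f i + (1 - lam) * (1 * f i) := by ring
      rw [smul_smul, smul_smul, ← add_smul, ← this]
  rw [key]
  have hx' := huncond S f ε hεpm
  calc ‖lam • (∑ i ∈ S, f i • b i) + (1 - lam) • (∑ i ∈ S, (ε i * f i) • b i)‖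
      ≤ ‖lam • (∑ i ∈ S, f i • b i)‖ + ‖(1 - lam) • (∑ i ∈ S, (ε i * f i) • b i)‖ :=
        norm_add_le _ _
    _ = lam * ‖∑ i ∈ S, f i • b i‖ + (1 - lam) * ‖∑ i ∈ S, f i • b i‖ := by
        rw [norm_smul, norm_smul, hx', Real.norm_eq_abs, Real.norm_eq_abs,
          abs_of_nonneg h0, abs_of_nonneg (by linarith : (0:ℝ) ≤ 1 - lam)]
    _ = ‖∑ i ∈ S, f i • b i‖ := by ring

lemma aux_multi
    (huncond : ∀ (s : Finset ℕ) (a ε : ℕ → ℝ), (∀ n, ε n = 1 ∨ ε n = -1) →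
      ‖∑ i ∈ s, (ε i * a i) • b i‖ = ‖∑ i ∈ s, a i • b i‖)
    (S : Finset ℕ) (t f : ℕ → ℝ) (h : ∀ i ∈ S, |t i| ≤ 1) :
    ‖∑ i ∈ S, (t i * f i) • b i‖ ≤ ‖∑ i ∈ S, f i • b i‖ := by
  suffices H : ∀ T : Finset ℕ, T ⊆ S →
      ‖∑ i ∈ S, (if i ∈ T then t i * f i else f i) • b i‖ ≤ ‖∑ i ∈ S, f i • b i‖ by
    have := H S Finset.Subset.rfl
    have e : ∑ i ∈ S, (t i * f i) • b i
        = ∑ i ∈ S, (if i ∈ S then t i * f i else f i) • b i :=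
      Finset.sum_congr rfl fun i hi => by rw [if_pos hi]
    rw [e]; exact this
  intro T
  induction T using Finset.induction_on with
  | empty => intro _; simp
  | @insert j T hj ih =>
    intro hsub
    have hjS : j ∈ S := hsub (Finset.mem_insert_self j T)
    have hTS : T ⊆ S := (Finset.subset_insert j T).trans hsub
    have step := aux_single b huncond (S := S) j (t j) (h j hjS)
      (fun i => if i ∈ T then t i * f i else f i)
    have eq1 : ∑ i ∈ S, (if i ∈ insert j T then t i * f i else f i) • b i
        = ∑ i ∈ S, (if i = j then t j * (if i ∈ T then t i * f i else f i)
            else (if i ∈ T then t i * f i else f i)) • b i := by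
      apply Finset.sum_congr rfl
      intro i hi
      by_cases hij : i = j
      · subst hij; simp [hj]
      · simp [hij, Finset.mem_insert]
    rw [eq1]
    exact le_trans step (ih hTS)

end aux

/-- if `(b)` is a 1-unconditional, 1-subsymmetric normalized basis (of a dual
space) which 1-dominates all of its normalized block bases, and `(xs)` is a subsymmetric
normalized block basic sequence of `(b)` all of whose members have a coefficient of absolute
value at least `c > 0`, then `(xs)` is equivalent to `(b)`:
`c‖∑ aⱼbⱼ‖ ≤ ‖∑ aⱼxsⱼ‖ ≤ ‖∑ aⱼbⱼ‖`. -/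
theorem stmt13 {V : Type*} [NormedAddCommGroup V] [NormedSpace ℝ V]
    (c : ℝ) (hc : 0 < c)
    (b : ℕ → V) (hbnorm : ∀ i, ‖b i‖ = 1)
    (huncond : ∀ (s : Finset ℕ) (a ε : ℕ → ℝ), (∀ n, ε n = 1 ∨ ε n = -1) →
      ‖∑ i ∈ s, (ε i * a i) • b i‖ = ‖∑ i ∈ s, a i • b i‖)
    (hbsubsym : ∀ π : ℕ → ℕ, StrictMono π → ∀ (n : ℕ) (a : Fin n → ℝ),
      ‖∑ j, a j • b (π j)‖ = ‖∑ j, a j • b (j : ℕ)‖)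
    (hdom : ∀ (z : ℕ → V) (B : ℕ → Finset ℕ) (w : ℕ → ℝ),
      (∀ j, z j = ∑ i ∈ B j, w i • b i) → (∀ j, (B j).Nonempty) →
      (∀ j k : ℕ, j < k → ∀ s ∈ B j, ∀ t ∈ B k, s < t) → (∀ j, ‖z j‖ = 1) →
      ∀ (n : ℕ) (a : Fin n → ℝ), ‖∑ j, a j • z (j : ℕ)‖ ≤ ‖∑ j, a j • b (j : ℕ)‖)
    (xs : ℕ → V) (A : ℕ → Finset ℕ) (w : ℕ → ℝ)
    (hxs : ∀ j, xs j = ∑ i ∈ A j, w i • b i)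
    (hAne : ∀ j, (A j).Nonempty)
    (hA : ∀ j k : ℕ, j < k → ∀ s ∈ A j, ∀ t ∈ A k, s < t)
    (hxn : ∀ j, ‖xs j‖ = 1)
    (hxsubsym : ∃ D : ℝ, 1 ≤ D ∧ ∀ π : ℕ → ℕ, StrictMono π → ∀ (n : ℕ) (a : Fin n → ℝ),
      D⁻¹ * ‖∑ j, a j • xs (j : ℕ)‖ ≤ ‖∑ j, a j • xs (π j)‖ ∧
      ‖∑ j, a j • xs (π j)‖ ≤ D * ‖∑ j, a j • xs (j : ℕ)‖)
    (hbig : ∀ j, ∃ k ∈ A j, c ≤ |w k|) :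
    ∀ (n : ℕ) (a : Fin n → ℝ),
      c * ‖∑ j, a j • b (j : ℕ)‖ ≤ ‖∑ j, a j • xs (j : ℕ)‖ ∧
      ‖∑ j, a j • xs (j : ℕ)‖ ≤ ‖∑ j, a j • b (j : ℕ)‖ := by
  classical
  intro n a
  refine ⟨?_, hdom xs A w hxs hAne hA hxn n a⟩
  -- choose the large coordinate in each block
  choose k hk1 hk2 using hbig
  have hkmono : StrictMono k := fun j j' hjj' => hA j j' hjj' (k j) (hk1 j) (k j') (hk1 j')
  have huniq : ∀ i j j', i ∈ A j → i ∈ A j' → j = j' := by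
    intro i j j' h h'
    by_contra hne
    rcases lt_or_gt_of_ne hne with hlt | hlt
    · exact lt_irrefl i (hA j j' hlt i h i h')
    · exact lt_irrefl i (hA j' j hlt i h' i h)
  set abar : ℕ → ℝ := fun j => if h : j < n then a ⟨j, h⟩ else 0 with habar
  set f : ℕ → ℝ := fun i => (if h : ∃ j, i ∈ A j then abar h.choose else 0) * w i with hf
  have hfval : ∀ j i, i ∈ A j → f i = abar j * w i := by
    intro j i hi
    have hex : ∃ j, i ∈ A j := ⟨j, hi⟩
    have hch : hex.choose = j := huniq i _ j hex.choose_spec hi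
    rw [hf]
    simp only [dif_pos hex, hch]
  set S : Finset ℕ := (Finset.range n).biUnion A with hS
  have hdisj : (↑(Finset.range n) : Set ℕ).PairwiseDisjoint A := by
    intro j _ j' _ hne
    simp only [Function.onFun]
    rw [Finset.disjoint_left]
    intro i hi hi'
    exact hne (huniq i j j' hi hi')
  -- the sum as a single block sum
  have hsum : ∑ j : Fin n, a j • xs (j : ℕ) = ∑ i ∈ S, f i • b i := by
    rw [hS, Finset.sum_biUnion hdisj]
    have e1 : ∀ j ∈ Finset.range n, ∑ i ∈ A j, f i • b i = abar j • xs j := by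
      intro j _
      rw [hxs j, Finset.smul_sum]
      apply Finset.sum_congr rfl
      intro i hi
      rw [hfval j i hi, smul_smul]
    rw [Finset.sum_congr rfl e1]
    rw [← Fin.sum_univ_eq_sum_range (fun j => abar j • xs j) n]
    apply Finset.sum_congr rfl
    intro j _
    have : abar (j : ℕ) = a j := by rw [habar]; simp [j.isLt]
    rw [this]
  set T : Finset ℕ := (Finset.range n).image k with hT
  have hTS : T ⊆ S := by
    intro i hi
    rw [hT, Finset.mem_image] at hi
    obtain ⟨j, hj, rfl⟩ := hi
    rw [hS, Finset.mem_biUnion]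
    exact ⟨j, hj, hk1 j⟩
  have hkinj : Set.InjOn k ↑(Finset.range n) := fun x _ y _ h => hkmono.injective h
  -- the scaled-down sub-sum equals c • ∑ a j • b (k j)
  set t : ℕ → ℝ := fun i => c / w i with ht
  have htle : ∀ i ∈ T, |t i| ≤ 1 := by
    intro i hi
    rw [hT, Finset.mem_image] at hi
    obtain ⟨j, _, rfl⟩ := hi
    have hw : c ≤ |w (k j)| := hk2 j
    have hwpos : 0 < |w (k j)| := lt_of_lt_of_le hc hw
    rw [ht]
    simp only [abs_div]
    rw [div_le_one hwpos, abs_of_pos hc]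
    exact hw
  have hscale := aux_multi b huncond T t f htle
  have hsubsum := aux_subsum b huncond hTS f
  have himg1 : ∑ i ∈ T, (t i * f i) • b i
      = c • ∑ j : Fin n, a j • b (k (j : ℕ)) := by
    rw [hT, Finset.sum_image (fun x hx y hy h => hkmono.injective h)]
    rw [Finset.smul_sum, ← Fin.sum_univ_eq_sum_range (fun j => (t (k j) * f (k j)) • b (k j)) n]
    apply Finset.sum_congr rfl
    intro j _
    have hwne : w (k (j : ℕ)) ≠ 0 := by
      intro h0
      have := hk2 (j : ℕ)
      rw [h0] at this
      simp at this
      linarith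
    have hfv : f (k (j : ℕ)) = abar (j : ℕ) * w (k (j : ℕ)) := hfval _ _ (hk1 _)
    have habj : abar (j : ℕ) = a j := by rw [habar]; simp [j.isLt]
    rw [hfv, habj, ht]
    rw [smul_smul]
    congr 1
    field_simp
  have hsubsym := hbsubsym k hkmono n a
  calc c * ‖∑ j : Fin n, a j • b (j : ℕ)‖
      = c * ‖∑ j : Fin n, a j • b (k (j : ℕ))‖ := by rw [hsubsym]
    _ = ‖c • ∑ j : Fin n, a j • b (k (j : ℕ))‖ := by
        rw [norm_smul, Real.norm_eq_abs, abs_of_pos hc]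
    _ = ‖∑ i ∈ T, (t i * f i) • b i‖ := by rw [himg1]
    _ ≤ ‖∑ i ∈ T, f i • b i‖ := hscale
    _ ≤ ‖∑ i ∈ S, f i • b i‖ := hsubsum
    _ = ‖∑ j : Fin n, a j • xs (j : ℕ)‖ := by rw [hsum]
end
end
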